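/- arXiv:0911.1590 — 5 statements merged into one kernel-verified Lean document; each statement's English description precedes it below -/
import Mathlib

section
/- Under the standing assumptions, the generalized semiflow S of generalized solutions is asymptotically compact: for every sequence of generalized solutions (u_j,φ̄_j) such that the set of initial values {(u_j(0), φ̄_j(0))} is bounded in (X,d_X), and for every sequence t_j → +∞, the sequence (u_j(t_j), φ̄_j(t_j)) admits a subsequence converging in (X,d_X). -/
open Filter MeasureTheory Set Topology
open scoped ENNReal NNReal Classical

noncomputable section

namespace GradientFlowPaper

/-- The conjugate exponent `p' = p/(p-1)`. -/
def conjExp (p : ℝ) : ℝ := p / (p - 1)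

variable {U : Type*}

section MetricDefs

variable [MetricSpace U]

/-- The local slope `|∂φ|(u) = limsup_{v → u} (φ(u) - φ(v))⁺ / d(u,v)`. -/
def localSlope (φ : U → EReal) (u : U) : ℝ≥0∞ :=
  Filter.limsup (fun v => ENNReal.ofReal ((φ u - φ v).toReal / dist u v)) (𝓝[≠] u)

/-- The strong relaxed slope `|∂⁺φ|(u)`:  the infimum of `liminf |∂φ|(uₙ)` over all
sequences `uₙ →σ u` with `φ(uₙ) → φ(u)`. -/
def strongRelaxedSlope (σ : TopologicalSpace U) (φ : U → EReal) (u : U) : ℝ≥0∞ :=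
  sInf { L : ℝ≥0∞ | ∃ un : ℕ → U,
    Filter.Tendsto un Filter.atTop (@nhds U σ u) ∧
    Filter.Tendsto (fun n => φ (un n)) Filter.atTop (nhds (φ u)) ∧
    L = Filter.liminf (fun n => localSlope φ (un n)) Filter.atTop }

/-- The weak relaxed slope `|∂⁻φ|(u, φ̄)`: the infimum of `liminf |∂φ|(uₙ)` over all
sequences `uₙ →σ u` with `φ(uₙ) → φ̄`. -/
def weakRelaxedSlope (σ : TopologicalSpace U) (φ : U → EReal) (u : U) (c : ℝ) : ℝ≥0∞ :=
  sInf { L : ℝ≥0∞ | ∃ un : ℕ → U,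
    Filter.Tendsto un Filter.atTop (@nhds U σ u) ∧
    Filter.Tendsto (fun n => φ (un n)) Filter.atTop (nhds (c : EReal)) ∧
    L = Filter.liminf (fun n => localSlope φ (un n)) Filter.atTop }

/-- `u ∈ AC^p([0,T]; U)`. -/
def ACpOn (p T : ℝ) (u : ℝ → U) : Prop :=
  ∃ m : ℝ → ℝ, MeasureTheory.MemLp m (ENNReal.ofReal p) (volume.restrict (Icc (0:ℝ) T)) ∧
    ∀ s t : ℝ, 0 ≤ s → s ≤ t → t ≤ T → dist (u s) (u t) ≤ ∫ r in s..t, m r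

/-- `u ∈ AC^p_loc([0,∞); U)`. -/
def ACploc (p : ℝ) (u : ℝ → U) : Prop := ∀ T : ℝ, 0 < T → ACpOn p T u

/-- The metric derivative `|u'|(t)`, encoded as the `limsup` of the difference quotients
(it coincides with the metric derivative at every point where the latter exists). -/
def metricDeriv (u : ℝ → U) (t : ℝ) : ℝ :=
  Filter.limsup (fun s => dist (u s) (u t) / |s - t|) (𝓝[≠] t)

/-- A generalized solution of the metric `p`-gradient flow of `φ`: a pair `(u, c)` with
`u ∈ AC^p_loc`, satisfying the energy inequality
`(1/p)∫ₛᵗ |u'|^p + (1/p')∫ₛᵗ |∂⁻φ|(u,c)^{p'} + c(t) ≤ c(s)` for `0 ≤ s ≤ t` and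
`φ(u(t)) ≤ c(t)` for `t ≥ 0`. -/
def IsGeneralizedSolution (σ : TopologicalSpace U) (φ : U → EReal) (p : ℝ)
    (u : ℝ → U) (c : ℝ → ℝ) : Prop :=
  ACploc p u ∧
  (∀ s t : ℝ, 0 ≤ s → s ≤ t →
    c t ≤ c s ∧
    ENNReal.ofReal (1/p) * (∫⁻ r in Ioc s t, ENNReal.ofReal (metricDeriv u r ^ p)) +
      ENNReal.ofReal (1/(conjExp p)) *
        (∫⁻ r in Ioc s t, weakRelaxedSlope σ φ (u r) (c r) ^ (conjExp p)) ≤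
      ENNReal.ofReal (c s - c t)) ∧
  (∀ t : ℝ, 0 ≤ t → φ (u t) ≤ (c t : EReal))

/-- Absolute continuity of a real function on `[a,b]`, encoded through the integral
representation by an integrable density. -/
def ACRealOn (a b : ℝ) (f : ℝ → ℝ) : Prop :=
  ∃ g : ℝ → ℝ, MeasureTheory.IntegrableOn g (Icc a b) ∧
    ∀ t ∈ Icc a b, f t = f a + ∫ r in a..t, g r

/-- Local absolute continuity on `[0,∞)`. -/
def LocACReal (f : ℝ → ℝ) : Prop := ∀ T : ℝ, 0 < T → ACRealOn 0 T f

/-- Energy solution on `[0,T]`. -/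
def IsEnergySolutionOn (σ : TopologicalSpace U) (φ : U → EReal) (p T : ℝ)
    (u : ℝ → U) : Prop :=
  ACpOn p T u ∧
  (∀ t ∈ Icc (0:ℝ) T, φ (u t) ≠ ⊤) ∧
  ACRealOn 0 T (fun t => (φ (u t)).toReal) ∧
  (∫⁻ t in Ioc (0:ℝ) T, strongRelaxedSlope σ φ (u t) ^ (conjExp p)) < ⊤ ∧
  (∀ᵐ t ∂(volume : Measure ℝ), t ∈ Ioc (0:ℝ) T →
    deriv (fun s => (φ (u s)).toReal) t + (1/p) * metricDeriv u t ^ p +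
      (1/(conjExp p)) * ((strongRelaxedSlope σ φ (u t)).toReal) ^ (conjExp p) = 0)

/-- Energy solution of the metric `p`-gradient flow of `φ` on `[0,∞)`. -/
def IsEnergySolution (σ : TopologicalSpace U) (φ : U → EReal) (p : ℝ) (u : ℝ → U) : Prop :=
  ∀ T : ℝ, 0 < T → IsEnergySolutionOn σ φ p T u

/-- `g` is a strong upper gradient for `φ`. -/
def IsStrongUpperGradient (φ : U → EReal) (g : U → ℝ≥0∞) : Prop :=
  ∀ u : ℝ → U, ACploc 1 u →
    Measurable (fun t => g (u t)) ∧
    ∀ s t : ℝ, 0 ≤ s → s ≤ t →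
      (φ (u t) - φ (u s)).abs ≤ ∫⁻ r in Ioc s t, g (u r) * ENNReal.ofReal (metricDeriv u r)

/-- `(λ,p)`-geodesic convexity of `φ`. -/
def GeodConvex (φ : U → EReal) (lam p : ℝ) : Prop :=
  ∀ v₀ v₁ : U, φ v₀ ≠ ⊤ → φ v₁ ≠ ⊤ →
    ∃ γ : ℝ → U, γ 0 = v₀ ∧ γ 1 = v₁ ∧
      (∀ s t : ℝ, 0 ≤ s → s ≤ t → t ≤ 1 →
        dist (γ s) (γ t) = (t - s) * dist (γ 0) (γ 1)) ∧
      (∀ t : ℝ, 0 ≤ t → t ≤ 1 →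
        φ (γ t) ≤ ((1 - t : ℝ) : EReal) * φ (γ 0) + ((t : ℝ) : EReal) * φ (γ 1)
          - (((lam / p) * t * (1 - t) * dist (γ 0) (γ 1) ^ p : ℝ) : EReal))

/-- The conditional continuity property (CONT). -/
def CondCont (σ : TopologicalSpace U) (φ : U → EReal) : Prop :=
  ∀ (un : ℕ → U) (u : U),
    Filter.Tendsto un Filter.atTop (@nhds U σ u) →
    (∃ C : ℝ, ∀ n, φ (un n) ≤ (C : EReal) ∧ localSlope φ (un n) ≤ ENNReal.ofReal C) →
    Filter.Tendsto (fun n => φ (un n)) Filter.atTop (nhds (φ u))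

/-- The standing assumptions (A1)–(A4) of the paper, together with the properness of `φ`
and `1 < p`. -/
structure StandingAssumptions (σ : TopologicalSpace U) (dσ : U → U → ℝ)
    (φ : U → EReal) (p : ℝ) : Prop where
  p_gt : 1 < p
  complete : CompleteSpace U
  σ_weaker : ∀ s : Set U, σ.IsOpen s → IsOpen s
  σ_hausdorff : @T2Space U σ
  d_σ_lsc : ∀ (un vn : ℕ → U) (u v : U),
    Filter.Tendsto un Filter.atTop (@nhds U σ u) →
    Filter.Tendsto vn Filter.atTop (@nhds U σ v) →
    dist u v ≤ Filter.liminf (fun n => dist (un n) (vn n)) Filter.atTop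
  dσ_eq_zero : ∀ u v : U, dσ u v = 0 ↔ u = v
  dσ_symm : ∀ u v : U, dσ u v = dσ v u
  dσ_triangle : ∀ u v w : U, dσ u w ≤ dσ u v + dσ v w
  dσ_weaker : ∀ (un : ℕ → U) (u : U), Filter.Tendsto un Filter.atTop (@nhds U σ u) →
    Filter.Tendsto (fun n => dσ (un n) u) Filter.atTop (nhds (0:ℝ))
  proper : (∃ u : U, φ u ≠ ⊤) ∧ ∀ u : U, φ u ≠ ⊥
  σ_lsc : ∀ (un : ℕ → U) (u : U), Filter.Tendsto un Filter.atTop (@nhds U σ u) →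
    φ u ≤ Filter.liminf (fun n => φ (un n)) Filter.atTop
  compact_sublevels : ∀ (C : ℝ) (un : ℕ → U), (∀ n, φ (un n) ≤ (C : EReal)) →
    ∃ (u : U) (k : ℕ → ℕ), StrictMono k ∧
      Filter.Tendsto (fun n => un (k n)) Filter.atTop (@nhds U σ u)

/-- The phase space `X = {(u,φ̄) ∈ D(φ) × ℝ : φ̄ ≥ φ(u)}`. -/
abbrev Phase (φ : U → EReal) := {z : U × ℝ // φ z.1 ≤ (z.2 : EReal)}

/-- The metric `d_X((u,φ̄),(u',φ̄')) = d_σ(u,u') + |φ̄ - φ̄'|` on the phase space. -/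
def phaseDist (dσ : U → U → ℝ) (φ : U → EReal) (z w : Phase φ) : ℝ :=
  dσ z.1.1 w.1.1 + |z.1.2 - w.1.2|

/-- The family `S` of all generalized solutions, as curves in the phase space. -/
def genSolSet (σ : TopologicalSpace U) (φ : U → EReal) (p : ℝ) :
    Set (ℝ≥0 → Phase φ) :=
  { g | ∃ (u : ℝ → U) (c : ℝ → ℝ), IsGeneralizedSolution σ φ p u c ∧
      ∀ t : ℝ≥0, (g t).1 = (u (t : ℝ), c (t : ℝ)) }

/-- The effective domain `D(φ)` as a type. -/
abbrev Dom (φ : U → EReal) := {u : U // φ u ≠ ⊤}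

/-- The metric `d_φ(u,v) = d_σ(u,v) + |φ(u) - φ(v)|` on `D(φ)`. -/
def domDist (dσ : U → U → ℝ) (φ : U → EReal) (u v : Dom φ) : ℝ :=
  dσ u.1 v.1 + |(φ u.1).toReal - (φ v.1).toReal|

/-- The family `E` of all energy solutions, as curves in `D(φ)`. -/
def energySolSet (σ : TopologicalSpace U) (φ : U → EReal) (p : ℝ) :
    Set (ℝ≥0 → Dom φ) :=
  { g | ∃ u : ℝ → U, IsEnergySolution σ φ p u ∧ ∀ t : ℝ≥0, (g t).1 = u (t : ℝ) }

/-- Projection `π₁` from the phase space onto `D(φ)`. -/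
def projPhase (φ : U → EReal) : Phase φ → Dom φ :=
  fun z => ⟨z.1.1, (lt_of_le_of_lt z.2 (EReal.coe_lt_top _)).ne⟩

end MetricDefs

section Semiflow

variable {X : Type*}

/-- Convergence of a sequence with respect to an explicit distance function. -/
def Converges (dX : X → X → ℝ) (f : ℕ → X) (x : X) : Prop :=
  Filter.Tendsto (fun n => dX (f n) x) Filter.atTop (nhds (0:ℝ))

/-- Ball's notion of a generalized semiflow: (H1) existence, (H2) translation,
(H3) concatenation, (H4) upper semicontinuity with respect to initial data. -/
def IsGenSemiflow (dX : X → X → ℝ) (G : Set (ℝ≥0 → X)) : Prop :=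
  (∀ x : X, ∃ g ∈ G, g 0 = x) ∧
  (∀ g ∈ G, ∀ τ : ℝ≥0, (fun t => g (t + τ)) ∈ G) ∧
  (∀ g ∈ G, ∀ h ∈ G, ∀ t : ℝ≥0, h 0 = g t →
    (fun τ => if τ ≤ t then g τ else h (τ - t)) ∈ G) ∧
  (∀ gs : ℕ → (ℝ≥0 → X), (∀ n, gs n ∈ G) → ∀ x : X,
    Converges dX (fun n => gs n 0) x →
    ∃ k : ℕ → ℕ, StrictMono k ∧ ∃ g ∈ G, g 0 = x ∧
      ∀ t : ℝ≥0, Converges dX (fun n => gs (k n) t) (g t))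

/-- `T(t)E = {g(t) : g ∈ G, g(0) ∈ E}`. -/
def Tset (G : Set (ℝ≥0 → X)) (t : ℝ≥0) (E : Set X) : Set X :=
  { x | ∃ g ∈ G, g 0 ∈ E ∧ g t = x }

/-- Boundedness of a set with respect to an explicit distance function. -/
def IsBoundedIn (dX : X → X → ℝ) (B : Set X) : Prop :=
  ∃ R : ℝ, ∀ x ∈ B, ∀ y ∈ B, dX x y ≤ R

/-- (Sequential) compactness of a set with respect to an explicit distance function. -/
def SeqCompactIn (dX : X → X → ℝ) (A : Set X) : Prop :=
  ∀ f : ℕ → X, (∀ n, f n ∈ A) →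
    ∃ x ∈ A, ∃ k : ℕ → ℕ, StrictMono k ∧ Converges dX (fun n => f (k n)) x

/-- `A` attracts `B`: the Hausdorff semidistance `e(T(t)B, A)` tends to `0` as `t → ∞`. -/
def AttractsIn (dX : X → X → ℝ) (G : Set (ℝ≥0 → X)) (A B : Set X) : Prop :=
  ∀ ε : ℝ, 0 < ε → ∃ T : ℝ≥0, ∀ t : ℝ≥0, T ≤ t → ∀ x ∈ Tset G t B, ∃ a ∈ A, dX x a < ε

/-- A global attractor: non-empty, compact, invariant, attracting all bounded sets. -/
def IsGlobalAttractor (dX : X → X → ℝ) (G : Set (ℝ≥0 → X)) (A : Set X) : Prop :=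
  A.Nonempty ∧ SeqCompactIn dX A ∧ (∀ t : ℝ≥0, Tset G t A = A) ∧
  ∀ B : Set X, IsBoundedIn dX B → AttractsIn dX G A B

/-- A complete orbit of `G`. -/
def IsCompleteOrbit (G : Set (ℝ≥0 → X)) (w : ℝ → X) : Prop :=
  ∀ s : ℝ, (fun t : ℝ≥0 => w (s + (t : ℝ))) ∈ G

/-- A rest point of `G`: a point whose constant curve is a complete orbit. -/
def IsRestPoint (G : Set (ℝ≥0 → X)) (x : X) : Prop :=
  IsCompleteOrbit G (fun _ => x)

/-- The ω-limit set of a single trajectory. -/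
def OmegaLimit (dX : X → X → ℝ) (g : ℝ≥0 → X) : Set X :=
  { x | ∃ tn : ℕ → ℝ≥0, Filter.Tendsto (fun n => (tn n : ℝ)) Filter.atTop Filter.atTop ∧
      Converges dX (fun n => g (tn n)) x }

/-- (C0): strong measurability of a curve, i.e. a.e. pointwise limit on `(0,∞)` of
measurable countably-valued maps. -/
def StronglyMeasurableCurve (dX : X → X → ℝ) (g : ℝ≥0 → X) : Prop :=
  ∃ f : ℕ → ℝ≥0 → X,
    (∀ j, (Set.range (f j)).Countable ∧ ∀ x : X, MeasurableSet {t : ℝ≥0 | f j t = x}) ∧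
    ∀ᵐ t ∂(volume : Measure ℝ), 0 < t →
      Filter.Tendsto (fun j => dX (f j t.toNNReal) (g t.toNNReal)) Filter.atTop (nhds (0:ℝ))

/-- (C1): continuity of a curve on `(0,∞)`. -/
def ContCurveOnPos (dX : X → X → ℝ) (g : ℝ≥0 → X) : Prop :=
  ∀ t : ℝ≥0, 0 < t → ∀ tn : ℕ → ℝ≥0, Filter.Tendsto tn Filter.atTop (nhds t) →
    Converges dX (fun n => g (tn n)) (g t)

/-- (C3): continuity of a curve on `[0,∞)`. -/
def ContCurve (dX : X → X → ℝ) (g : ℝ≥0 → X) : Prop :=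
  ∀ t : ℝ≥0, ∀ tn : ℕ → ℝ≥0, Filter.Tendsto tn Filter.atTop (nhds t) →
    Converges dX (fun n => g (tn n)) (g t)

/-- (C2): compactness with local uniform convergence on compact subsets of `(0,∞)`. -/
def C2Property (dX : X → X → ℝ) (G : Set (ℝ≥0 → X)) : Prop :=
  ∀ gs : ℕ → (ℝ≥0 → X), (∀ n, gs n ∈ G) → ∀ x : X, Converges dX (fun n => gs n 0) x →
    ∃ k : ℕ → ℕ, StrictMono k ∧ ∃ g ∈ G, g 0 = x ∧
      ∀ a b : ℝ≥0, 0 < a → ∀ ε : ℝ, 0 < ε →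
        ∃ N : ℕ, ∀ n, N ≤ n → ∀ t : ℝ≥0, a ≤ t → t ≤ b → dX (gs (k n) t) (g t) < ε

/-- A Lyapunov function for `G`: continuous, decreasing along solutions, and constant
only along stationary complete orbits. -/
def IsLyapunov (dX : X → X → ℝ) (G : Set (ℝ≥0 → X)) (V : X → ℝ) : Prop :=
  (∀ (x : X) (xn : ℕ → X), Converges dX xn x →
    Filter.Tendsto (fun n => V (xn n)) Filter.atTop (nhds (V x))) ∧
  (∀ g ∈ G, ∀ s t : ℝ≥0, s ≤ t → V (g t) ≤ V (g s)) ∧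
  (∀ w : ℝ → X, IsCompleteOrbit G w → (∀ s t : ℝ, V (w s) = V (w t)) →
    ∀ s t : ℝ, w s = w t)

end Semiflow

section MinimizingMovements

variable [MetricSpace U]

/-- The nodes `t⁰ = 0`, `tⁿ = τ⁰ + ⋯ + τ^{n-1}` of a partition. -/
def nodes (τ : ℕ → ℝ) (n : ℕ) : ℝ := ∑ i ∈ Finset.range n, τ i

/-- A discrete solution of the variational approximation scheme. -/
def IsDiscreteSolution (φ : U → EReal) (p : ℝ) (τ : ℕ → ℝ) (u₀ : U) (Ud : ℕ → U) : Prop :=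
  Ud 0 = u₀ ∧
  ∀ n : ℕ, ∀ v : U,
    ((dist (Ud (n+1)) (Ud n) ^ p / (p * τ n ^ (p-1)) : ℝ) : EReal) + φ (Ud (n+1)) ≤
      ((dist v (Ud n) ^ p / (p * τ n ^ (p-1)) : ℝ) : EReal) + φ v

/-- The left-continuous piecewise constant interpolant of a discrete solution. -/
def interp (τ : ℕ → ℝ) (Ud : ℕ → U) (t : ℝ) : U :=
  if h : ∃ n, t ≤ nodes τ n then Ud (Nat.find h) else Ud 0

/-- `u` is a Generalized Minimizing Movement for `φ` starting from `u₀`. -/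
def IsGMM (σ : TopologicalSpace U) (φ : U → EReal) (p : ℝ) (u₀ : U) (u : ℝ → U) : Prop :=
  ∃ (τs : ℕ → ℕ → ℝ) (Us : ℕ → ℕ → U) (D : ℕ → ℝ),
    (∀ k n, 0 < τs k n) ∧ (∀ k n, τs k n ≤ D k) ∧
    Filter.Tendsto D Filter.atTop (nhds (0:ℝ)) ∧
    (∀ k, IsDiscreteSolution φ p (τs k) u₀ (Us k)) ∧
    ∀ t : ℝ, 0 ≤ t →
      Filter.Tendsto (fun k => interp (τs k) (Us k) t) Filter.atTop (@nhds U σ (u t))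

end MinimizingMovements

section Banach

variable {B : Type*} [NormedAddCommGroup B] [NormedSpace ℝ B]

/-- The Fréchet subdifferential `∂φ(u)` of `φ : B → (-∞,∞]` at `u ∈ D(φ)`. -/
def FrechetSubdiff (φ : B → EReal) (u : B) : Set (StrongDual ℝ B) :=
  { ξ | φ u ≠ ⊤ ∧ ∀ ε : ℝ, 0 < ε → ∃ δ : ℝ, 0 < δ ∧ ∀ v : B, ‖v - u‖ < δ →
      φ u + ((ξ (v - u) - ε * ‖v - u‖ : ℝ) : EReal) ≤ φ v }

/-- Weak convergence in the dual `B'` (tested against the bidual). -/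
def WeakConvDual (ξn : ℕ → StrongDual ℝ B) (ξ : StrongDual ℝ B) : Prop :=
  ∀ F : StrongDual ℝ (StrongDual ℝ B),
    Filter.Tendsto (fun n => F (ξn n)) Filter.atTop (nhds (F ξ))

/-- The limiting subdifferential `∂_ℓφ(u)`. -/
def LimitingSubdiff (φ : B → EReal) (u : B) : Set (StrongDual ℝ B) :=
  { ξ | ∃ (un : ℕ → B) (ξn : ℕ → StrongDual ℝ B),
      (∀ n, ξn n ∈ FrechetSubdiff φ (un n)) ∧
      Filter.Tendsto un Filter.atTop (nhds u) ∧
      WeakConvDual ξn ξ ∧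
      ∃ C : ℝ, ∀ n, φ (un n) ≤ (C : EReal) }

/-- The strong limiting subdifferential `∂_sφ(u)`. -/
def StrongLimitingSubdiff (φ : B → EReal) (u : B) : Set (StrongDual ℝ B) :=
  { ξ | ∃ (un : ℕ → B) (ξn : ℕ → StrongDual ℝ B),
      (∀ n, ξn n ∈ FrechetSubdiff φ (un n)) ∧
      Filter.Tendsto un Filter.atTop (nhds u) ∧
      Filter.Tendsto ξn Filter.atTop (nhds ξ) ∧
      Filter.Tendsto (fun n => φ (un n)) Filter.atTop (nhds (φ u)) }

/-- The `p`-duality map `J_p(v) = {ξ ∈ B' : ⟨ξ,v⟩ = ‖v‖^p = ‖ξ‖_*^{p'}}`. -/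
def Jdual (p : ℝ) (v : B) : Set (StrongDual ℝ B) :=
  { ξ | ξ v = ‖v‖ ^ p ∧ ‖ξ‖ ^ (conjExp p) = ‖v‖ ^ p }

/-- The minimal dual norm `inf {‖ξ‖_* : ξ ∈ S}` of a set of dual elements (`∞` if empty). -/
def minNormSubdiff (S : Set (StrongDual ℝ B)) : ℝ≥0∞ :=
  ⨅ ξ ∈ S, (‖ξ‖₊ : ℝ≥0∞)

/-- The elements of minimal dual norm of a set of dual elements. -/
def ArgminSubdiff (S : Set (StrongDual ℝ B)) : Set (StrongDual ℝ B) :=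
  { ξ | ξ ∈ S ∧ ∀ η ∈ S, ‖ξ‖ ≤ ‖η‖ }

/-- The chain rule for `φ` with respect to its limiting subdifferential. -/
def ChainRuleLimiting (φ : B → EReal) (p : ℝ) : Prop :=
  ∀ T : ℝ, 0 < T → ∀ (u : ℝ → B) (ξ : ℝ → StrongDual ℝ B),
    ACpOn p T u →
    MeasureTheory.MemLp ξ (ENNReal.ofReal (conjExp p)) (volume.restrict (Ioc (0:ℝ) T)) →
    (∀ᵐ t ∂(volume : Measure ℝ), t ∈ Ioc (0:ℝ) T → ξ t ∈ LimitingSubdiff φ (u t)) →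
    ACRealOn 0 T (fun t => (φ (u t)).toReal) ∧
    ∀ᵐ t ∂(volume : Measure ℝ), t ∈ Ioc (0:ℝ) T →
      deriv (fun s => (φ (u s)).toReal) t = ξ t (deriv u t)

/-- `(λ,q)`-convexity of `φ` on a Banach space. -/
def LamQConvex (φ : B → EReal) (lam q : ℝ) : Prop :=
  ∀ u₀ u₁ : B, ∀ θ : ℝ, 0 ≤ θ → θ ≤ 1 →
    φ ((1-θ) • u₀ + θ • u₁) ≤
      ((1-θ : ℝ) : EReal) * φ u₀ + ((θ : ℝ) : EReal) * φ u₁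
        - (((lam/q) * θ * (1-θ) * ‖u₀ - u₁‖ ^ q : ℝ) : EReal)

/-- The set of (metric) solutions of the doubly nonlinear equation
`J_p(u'(t)) + ∂_ℓφ(u(t)) ∋ 0`, as curves in `D(φ)`. -/
def dnSolSet (φ : B → EReal) (p : ℝ) : Set (ℝ≥0 → Dom φ) :=
  { g | ∃ u : ℝ → B, ACploc p u ∧
      (∀ᵐ t ∂(volume : Measure ℝ), 0 < t →
        ∃ ξ ∈ Jdual p (deriv u t), -ξ ∈ LimitingSubdiff φ (u t)) ∧
      ∀ t : ℝ≥0, (g t).1 = u (t : ℝ) }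

end Banach

end GradientFlowPaper

namespace GradientFlowPaper

/-- **Theorem (Asymptotic compactness).**
Under the standing assumptions, the generalized semiflow of generalized solutions is
asymptotically compact: for any sequence of generalized solutions with bounded set of
initial values and any sequence of times `t_j → ∞`, the evaluations
`(u_j(t_j), φ̄_j(t_j))` admit a subsequence converging in `(X, d_X)`. -/
theorem generalized_solutions_asymptotically_compact
    {U : Type*} [MetricSpace U] (σ : TopologicalSpace U) (dσ : U → U → ℝ)
    (φ : U → EReal) (p : ℝ)
    (h : StandingAssumptions σ dσ φ p) :
    ∀ g : ℕ → (ℝ≥0 → Phase φ), (∀ j, g j ∈ genSolSet σ φ p) →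
      IsBoundedIn (phaseDist dσ φ) (Set.range (fun j => g j 0)) →
      ∀ tj : ℕ → ℝ≥0, Filter.Tendsto (fun j => ((tj j : ℝ))) Filter.atTop Filter.atTop →
      ∃ (x : Phase φ) (k : ℕ → ℕ), StrictMono k ∧
        Converges (phaseDist dσ φ) (fun n => g (k n) (tj (k n))) x := by
  intro g hg hb tj _
  have hg' : ∀ j, ∃ (u : ℝ → U) (c : ℝ → ℝ), IsGeneralizedSolution σ φ p u c ∧
      ∀ t : ℝ≥0, (g j t).1 = (u (t : ℝ), c (t : ℝ)) := hg
  choose uu cc hsol heq using hg'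
  -- dσ is nonnegative
  have hdnn : ∀ a b : U, 0 ≤ dσ a b := by
    intro a b
    have h1 := h.dσ_triangle a b a
    have h2 := (h.dσ_eq_zero a a).mpr rfl
    have h3 := h.dσ_symm b a
    linarith
  obtain ⟨R, hR⟩ := hb
  set C : ℝ := cc 0 0 + R with hCdef
  have hc0 : ∀ j, cc j 0 ≤ C := by
    intro j
    have h1 := hR (g j 0) ⟨j, rfl⟩ (g 0 0) ⟨0, rfl⟩
    have e1 : (g j 0).1.2 = cc j 0 := by rw [heq j 0]; norm_num
    have e2 : (g 0 0).1.2 = cc 0 0 := by rw [heq 0 0]; norm_num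
    have hd := hdnn (g j 0).1.1 (g 0 0).1.1
    rw [phaseDist, e1, e2] at h1
    have habs : |cc j 0 - cc 0 0| ≤ R := by linarith
    have := (abs_le.mp habs).2
    linarith
  have hct : ∀ j, cc j ((tj j : ℝ)) ≤ C := fun j =>
    ((hsol j).2.1 0 (tj j : ℝ) le_rfl (tj j).coe_nonneg).1.trans (hc0 j)
  have hphase : ∀ j, φ (uu j ((tj j : ℝ))) ≤ ((cc j ((tj j : ℝ)) : ℝ) : EReal) :=
    fun j => (hsol j).2.2 _ (tj j).coe_nonneg
  set wn : ℕ → U := fun j => uu j ((tj j : ℝ)) with hwn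
  have hφw : ∀ j, φ (wn j) ≤ (C : EReal) := fun j =>
    (hphase j).trans (by exact_mod_cast hct j)
  obtain ⟨u, k, hk, hkconv⟩ := h.compact_sublevels C wn hφw
  have hl := h.σ_lsc (fun n => wn (k n)) u hkconv
  have hub : Filter.liminf (fun n => φ (wn (k n))) Filter.atTop ≤ (C : EReal) := by
    calc Filter.liminf (fun n => φ (wn (k n))) Filter.atTop
        ≤ Filter.liminf (fun _ : ℕ => (C : EReal)) Filter.atTop :=
          Filter.liminf_le_liminf (Filter.Eventually.of_forall fun n => hφw (k n))
      _ = (C : EReal) := Filter.liminf_const _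
  have hfin_top : φ u ≠ ⊤ := ((hl.trans hub).trans_lt (EReal.coe_lt_top C)).ne
  have hfin_bot : φ u ≠ ⊥ := h.proper.2 u
  set r : ℝ := (φ u).toReal with hrdef
  have hr : (r : EReal) = φ u := EReal.coe_toReal hfin_top hfin_bot
  have hlt : ((r - 1 : ℝ) : EReal) < Filter.liminf (fun n => φ (wn (k n))) Filter.atTop := by
    refine lt_of_lt_of_le ?_ hl
    rw [← hr]
    exact_mod_cast sub_one_lt r
  obtain ⟨N, hN⟩ := Filter.eventually_atTop.mp (Filter.eventually_lt_of_lt_liminf hlt)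
  set d : ℕ → ℝ := fun n => cc (k (n + N)) ((tj (k (n + N)) : ℝ)) with hddef
  have hdmem : ∀ n, d n ∈ Icc (r - 1) C := by
    intro n
    refine ⟨le_of_lt ?_, hct _⟩
    have h1 := hN (n + N) (Nat.le_add_left N n)
    have h2 := hphase (k (n + N))
    exact_mod_cast h1.trans_le h2
  obtain ⟨pb, _, ψ, hψ, hdconv⟩ := (isCompact_Icc).tendsto_subseq hdmem
  set k' : ℕ → ℕ := fun n => k (ψ n + N) with hk'def
  have hk' : StrictMono k' := hk.comp (hψ.add_const N)
  have htend : Filter.Tendsto (fun n => ψ n + N) Filter.atTop Filter.atTop :=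
    (hψ.add_const N).tendsto_atTop
  have hconv2 : Filter.Tendsto (fun n => wn (k' n)) Filter.atTop (@nhds U σ u) :=
    hkconv.comp htend
  have hdconv' : Filter.Tendsto (fun n => d (ψ n)) Filter.atTop (nhds pb) := hdconv
  -- φ u ≤ pb
  have hφu_le : φ u ≤ ((pb : ℝ) : EReal) := by
    have hlsc2 := h.σ_lsc (fun n => wn (k' n)) u hconv2
    have hle : ∀ n, φ (wn (k' n)) ≤ ((d (ψ n) : ℝ) : EReal) := fun n => hphase (k' n)
    have hco : Filter.Tendsto (fun n => ((d (ψ n) : ℝ) : EReal)) Filter.atTop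
        (nhds ((pb : ℝ) : EReal)) := (continuous_coe_real_ereal.tendsto pb).comp hdconv'
    calc φ u ≤ Filter.liminf (fun n => φ (wn (k' n))) Filter.atTop := hlsc2
      _ ≤ Filter.liminf (fun n => ((d (ψ n) : ℝ) : EReal)) Filter.atTop :=
          Filter.liminf_le_liminf (Filter.Eventually.of_forall hle)
      _ = ((pb : ℝ) : EReal) := hco.liminf_eq
  refine ⟨⟨(u, pb), hφu_le⟩, k', hk', ?_⟩
  have heval : ∀ n, phaseDist dσ φ (g (k' n) (tj (k' n))) ⟨(u, pb), hφu_le⟩ =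
      dσ (wn (k' n)) u + |d (ψ n) - pb| := by
    intro n
    rw [phaseDist, heq (k' n) (tj (k' n))]
  have t1 : Filter.Tendsto (fun n => dσ (wn (k' n)) u) Filter.atTop (nhds 0) :=
    h.dσ_weaker (fun n => wn (k' n)) u hconv2
  have t2 : Filter.Tendsto (fun n => |d (ψ n) - pb|) Filter.atTop (nhds 0) := by
    have := (hdconv'.sub_const pb).abs
    simpa using this
  have : (fun n => phaseDist dσ φ (g (k' n) (tj (k' n))) ⟨(u, pb), hφu_le⟩) =
      fun n => dσ (wn (k' n)) u + |d (ψ n) - pb| := funext heval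
  unfold Converges
  rw [this]
  simpa using t1.add t2

end GradientFlowPaper
end
end

section
/- Under the standing assumptions: (i) the projection π₂ : X → ℝ, (u,φ̄) ↦ φ̄, is a Lyapunov function for the generalized semiflow S of generalized solutions; (ii) the set of rest points of S is exactly Z(S) = {(ū,φ̄) ∈ X : |∂⁻φ|(ū,φ̄) = 0}. -/
open Filter MeasureTheory Set Topology
open scoped ENNReal NNReal Classical

noncomputable section

namespace GradientFlowPaper

section Aux

variable {U : Type*} [MetricSpace U]

private lemma primitive_diff {M : ℝ → ℝ} (hMint : Integrable M) (a : ℝ) :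
    ∀ x y : ℝ, x ≤ y →
      ∫ r in Ioc x y, M r = (∫ t in a..y, M t) - ∫ t in a..x, M t := by
  intro x y hxy
  have h1 : IntervalIntegrable M volume a x := hMint.intervalIntegrable
  have h2 : IntervalIntegrable M volume x y := hMint.intervalIntegrable
  have hadd := intervalIntegral.integral_add_adjacent_intervals h1 h2
  rw [← intervalIntegral.integral_of_le hxy, ← hadd]
  ring

private lemma key_dist_bound (u : ℝ → U) (M : ℝ → ℝ) (a b : ℝ) (hab : a ≤ b)
    (hMint : Integrable M) (hMnn : ∀ r, 0 ≤ M r)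
    (hAC : ∀ s t : ℝ, a ≤ s → s ≤ t → t ≤ b → dist (u s) (u t) ≤ ∫ r in Ioc s t, M r)
    (O : Set ℝ) (hO : IsOpen O) (ε : ℝ) (hε : 0 < ε)
    (hgood : ∀ r, r ∈ Ico a b → r ∉ O →
      ∃ s', r < s' ∧ s' ≤ b ∧ dist (u r) (u s') ≤ ε * (s' - r)) :
    dist (u a) (u b) ≤ ε * (b - a) + ∫ r in Ioc a b ∩ O, M r := by
  classical
  set P : ℝ → ℝ := fun x => ∫ t in a..x, M t with hPdef
  have hPcont : Continuous P := hMint.continuous_primitive a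
  have hPdiff : ∀ x y : ℝ, x ≤ y → ∫ r in Ioc x y, M r = P y - P x :=
    fun x y hxy => primitive_diff hMint a x y hxy
  set g : ℝ → ℝ := fun x => ∫ r in Ioc a x ∩ O, M r with hgdef
  have hmeas : ∀ x y : ℝ, MeasurableSet (Ioc x y ∩ O) :=
    fun x y => measurableSet_Ioc.inter hO.measurableSet
  have hgadd : ∀ x y : ℝ, a ≤ x → x ≤ y → g y = g x + ∫ r in Ioc x y ∩ O, M r := by
    intro x y hax hxy
    have hsplit : Ioc a y ∩ O = (Ioc a x ∩ O) ∪ (Ioc x y ∩ O) := by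
      rw [← union_inter_distrib_right, Ioc_union_Ioc_eq_Ioc hax hxy]
    simp only [hgdef]
    rw [hsplit, setIntegral_union
      ((Ioc_disjoint_Ioc_of_le le_rfl).mono inter_subset_left inter_subset_left)
      (hmeas x y) hMint.integrableOn hMint.integrableOn]
  have hgdiff_nonneg : ∀ x y : ℝ, 0 ≤ ∫ r in Ioc x y ∩ O, M r :=
    fun x y => setIntegral_nonneg (hmeas x y) (fun r _ => hMnn r)
  have hgdiff_le : ∀ x y : ℝ, x ≤ y → ∫ r in Ioc x y ∩ O, M r ≤ P y - P x := by
    intro x y hxy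
    rw [← hPdiff x y hxy]
    exact setIntegral_mono_set hMint.integrableOn (Filter.Eventually.of_forall hMnn)
      (HasSubset.Subset.eventuallyLE inter_subset_left)
  set F : ℝ → ℝ := fun x => dist (u a) (u x) with hFdef
  have hFdiff : ∀ x y : ℝ, a ≤ x → x ≤ y → y ≤ b → |F y - F x| ≤ P y - P x := by
    intro x y h1 h2 h3
    have h4 : |F y - F x| ≤ dist (u x) (u y) := by
      have h5 := abs_dist_sub_le (u y) (u x) (u a)
      rw [dist_comm (u y) (u a), dist_comm (u x) (u a), dist_comm (u y) (u x)] at h5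
      exact h5
    refine h4.trans ?_
    rw [← hPdiff x y h2]
    exact hAC x y h1 h2 h3
  set A : Set ℝ := {x | x ∈ Icc a b ∧ F x ≤ ε * (x - a) + g x} with hAdef
  have haA : a ∈ A := by
    refine ⟨⟨le_refl a, hab⟩, ?_⟩
    simp [hFdef, hgdef, Set.Ioc_self]
  have hbdd : BddAbove A := ⟨b, fun x hx => hx.1.2⟩
  set c := sSup A with hcdef
  have hac : a ≤ c := le_csSup hbdd haA
  have hcb : c ≤ b := csSup_le ⟨a, haA⟩ (fun x hx => hx.1.2)
  have hcA : c ∈ A := by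
    obtain ⟨ts, tsmono, tstend, tsmem⟩ := exists_seq_tendsto_sSup ⟨a, haA⟩ hbdd
    have htsc : ∀ n, ts n ≤ c := fun n => le_csSup hbdd (tsmem n)
    have htsa : ∀ n, a ≤ ts n := fun n => (tsmem n).1.1
    have hPt : Tendsto (fun n => P (ts n)) atTop (𝓝 (P c)) :=
      (hPcont.tendsto c).comp tstend
    have hPlim : Tendsto (fun n => P c - P (ts n)) atTop (𝓝 0) := by
      simpa using (tendsto_const_nhds (x := P c)).sub hPt
    have hFt : Tendsto (fun n => F (ts n)) atTop (𝓝 (F c)) := by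
      rw [tendsto_iff_dist_tendsto_zero]
      refine squeeze_zero (fun n => dist_nonneg) (fun n => ?_) hPlim
      rw [Real.dist_eq, abs_sub_comm]
      exact hFdiff (ts n) c (htsa n) (htsc n) hcb
    have hgt : Tendsto (fun n => g (ts n)) atTop (𝓝 (g c)) := by
      rw [tendsto_iff_dist_tendsto_zero]
      refine squeeze_zero (fun n => dist_nonneg) (fun n => ?_) hPlim
      have hgc : g c = g (ts n) + ∫ r in Ioc (ts n) c ∩ O, M r := hgadd _ _ (htsa n) (htsc n)
      have h1 := hgdiff_nonneg (ts n) c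
      have h2 := hgdiff_le (ts n) c (htsc n)
      rw [Real.dist_eq, abs_sub_comm, hgc, abs_of_nonneg (by linarith)]
      linarith
    refine ⟨⟨hac, hcb⟩, ?_⟩
    have hlim2 : Tendsto (fun n => ε * (ts n - a) + g (ts n)) atTop
        (𝓝 (ε * (c - a) + g c)) :=
      (tendsto_const_nhds.mul (tstend.sub tendsto_const_nhds)).add hgt
    exact le_of_tendsto_of_tendsto' hFt hlim2 (fun n => (tsmem n).2)
  have hceqb : c = b := by
    by_contra hne
    have hclt : c < b := lt_of_le_of_ne hcb hne
    have hstep : ∃ s', c < s' ∧ s' ≤ b ∧ F s' ≤ ε * (s' - a) + g s' := by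
      by_cases hcO : c ∈ O
      · obtain ⟨η, hη, hball⟩ := Metric.isOpen_iff.1 hO c hcO
        refine ⟨min (c + η / 2) b, lt_min (by linarith) hclt, min_le_right _ _, ?_⟩
        set s' := min (c + η / 2) b with hs'def
        have hcs' : c < s' := lt_min (by linarith) hclt
        have hs'b : s' ≤ b := min_le_right _ _
        have hsub : Ioc c s' ⊆ O := by
          intro z hz
          apply hball
          rw [Metric.mem_ball, Real.dist_eq, abs_of_pos (sub_pos.2 hz.1)]
          have h6 := hz.2.trans (min_le_left _ _)
          linarith
        have h1 : dist (u c) (u s') ≤ ∫ r in Ioc c s', M r := hAC c s' hac hcs'.le hs'b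
        have h2 : Ioc c s' ∩ O = Ioc c s' := inter_eq_self_of_subset_left hsub
        have h3 : F s' ≤ F c + dist (u c) (u s') := dist_triangle _ _ _
        have h4 := hcA.2
        have h5 : g s' = g c + ∫ r in Ioc c s' ∩ O, M r := hgadd c s' hac hcs'.le
        rw [h2] at h5
        have h6 : ε * (c - a) ≤ ε * (s' - a) :=
          mul_le_mul_of_nonneg_left (by linarith) hε.le
        linarith
      · obtain ⟨s', hs1, hs2, hs3⟩ := hgood c ⟨hac, hclt⟩ hcO
        refine ⟨s', hs1, hs2, ?_⟩
        have h3 : F s' ≤ F c + dist (u c) (u s') := dist_triangle _ _ _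
        have h4 := hcA.2
        have h5 : g c ≤ g s' := by
          have h7 := hgadd c s' hac hs1.le
          have h6 := hgdiff_nonneg c s'
          linarith
        have h6 : ε * (c - a) ≤ ε * (s' - a) :=
          mul_le_mul_of_nonneg_left (by linarith) hε.le
        linarith
    obtain ⟨s', h1, h2, h3⟩ := hstep
    have hmem : s' ∈ A := ⟨⟨hac.trans h1.le, h2⟩, h3⟩
    exact absurd (le_csSup hbdd hmem) (not_le.2 h1)
  have hfin := hcA.2
  rw [hceqb] at hfin
  simpa only [hFdef, hgdef] using hfin

private lemma continuousAt_of_dist_le (u : ℝ → U) (M : ℝ → ℝ) (a b : ℝ)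
    (hMint : Integrable M)
    (hAC : ∀ s t : ℝ, a ≤ s → s ≤ t → t ≤ b → dist (u s) (u t) ≤ ∫ r in Ioc s t, M r)
    {r : ℝ} (hr : r ∈ Ioo a b) : ContinuousAt u r := by
  have hPcont : Continuous (fun x : ℝ => ∫ t in a..x, M t) := hMint.continuous_primitive a
  rw [Metric.continuousAt_iff]
  intro ε hε
  obtain ⟨δ1, hδ1, hP⟩ := Metric.continuousAt_iff.1 hPcont.continuousAt ε hε
  refine ⟨min δ1 (min (r - a) (b - r)),
    lt_min hδ1 (lt_min (sub_pos.2 hr.1) (sub_pos.2 hr.2)), fun {x} hx => ?_⟩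
  rw [Real.dist_eq] at hx
  have hd1 : |x - r| < δ1 := hx.trans_le (min_le_left _ _)
  have hd2 : |x - r| < r - a := hx.trans_le ((min_le_right _ _).trans (min_le_left _ _))
  have hd3 : |x - r| < b - r := hx.trans_le ((min_le_right _ _).trans (min_le_right _ _))
  have hax : a ≤ x := by have h6 := abs_lt.1 hd2; linarith [h6.1]
  have hxb : x ≤ b := by have h6 := abs_lt.1 hd3; linarith [h6.2]
  have hPd : |(∫ t in a..x, M t) - ∫ t in a..r, M t| < ε := by
    have h6 := hP (show dist x r < δ1 by rwa [Real.dist_eq])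
    rwa [Real.dist_eq] at h6
  rcases le_total x r with hxr | hrx
  · have h6 := hAC x r hax hxr hr.2.le
    rw [primitive_diff hMint a x r hxr] at h6
    calc dist (u x) (u r) ≤ _ := h6
      _ ≤ |(∫ t in a..x, M t) - ∫ t in a..r, M t| := by
          rw [abs_sub_comm]; exact le_abs_self _
      _ < ε := hPd
  · have h6 := hAC r x hr.1.le hrx hxb
    rw [primitive_diff hMint a r x hrx, dist_comm] at h6
    calc dist (u x) (u r) ≤ _ := h6
      _ ≤ |(∫ t in a..x, M t) - ∫ t in a..r, M t| := le_abs_self _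
      _ < ε := hPd

private lemma gen_sol_const (σ : TopologicalSpace U) (φ : U → EReal) {p : ℝ} (hp : 1 < p)
    (u : ℝ → U) (c : ℝ → ℝ) (hsol : IsGeneralizedSolution σ φ p u c)
    (hc : ∀ x y : ℝ, 0 ≤ x → 0 ≤ y → c x = c y)
    {a b T : ℝ} (h0a : 0 < a) (hab : a ≤ b) (hbT : b < T) :
    u b = u a := by
  classical
  letI : TopologicalSpace U := UniformSpace.toTopologicalSpace
  have hT0 : 0 < T := lt_of_le_of_lt (le_trans h0a.le hab) hbT
  obtain ⟨m, hm, hmd⟩ := hsol.1 T hT0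
  haveI : IsFiniteMeasure (volume.restrict (Icc (0:ℝ) T)) :=
    ⟨by rw [Measure.restrict_apply_univ]; exact measure_Icc_lt_top⟩
  have hmi : IntegrableOn m (Icc 0 T) :=
    hm.integrable (by rw [ENNReal.one_le_ofReal]; exact hp.le)
  set Mg : ℝ → ℝ := (Icc (0:ℝ) T).indicator (fun r => |m r|) with hMgdef
  have hMgint : Integrable Mg := IntegrableOn.integrable_indicator hmi.abs measurableSet_Icc
  have hMgnn : ∀ r, 0 ≤ Mg r := fun r => Set.indicator_nonneg (fun z _ => abs_nonneg _) r
  have hACg : ∀ s t : ℝ, 0 ≤ s → s ≤ t → t ≤ T →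
      dist (u s) (u t) ≤ ∫ r in Ioc s t, Mg r := by
    intro s t h0s hst htT
    have hsub : Ioc s t ⊆ Icc 0 T := fun z hz => ⟨h0s.trans hz.1.le, hz.2.trans htT⟩
    have hint1 : IntegrableOn m (Ioc s t) := hmi.mono_set hsub
    calc dist (u s) (u t) ≤ ∫ r in s..t, m r := hmd s t h0s hst htT
      _ = ∫ r in Ioc s t, m r := intervalIntegral.integral_of_le hst
      _ ≤ ∫ r in Ioc s t, |m r| :=
          setIntegral_mono_on hint1 hint1.abs measurableSet_Ioc (fun z _ => le_abs_self _)
      _ = ∫ r in Ioc s t, Mg r := by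
          refine setIntegral_congr_fun measurableSet_Ioc (fun z hz => ?_)
          rw [hMgdef]
          exact (Set.indicator_of_mem (hsub hz) (fun r => |m r|)).symm
  have hE := (hsol.2.1) 0 T le_rfl hT0.le
  have hI1 : ∫⁻ r in Ioc (0:ℝ) T, ENNReal.ofReal (metricDeriv u r ^ p) = 0 := by
    have h0 : ENNReal.ofReal (c 0 - c T) = 0 := by
      rw [hc 0 T le_rfl hT0.le, sub_self, ENNReal.ofReal_zero]
    have hsum := le_antisymm (h0 ▸ hE.2) zero_le
    have h1 : ENNReal.ofReal (1/p) *
        (∫⁻ r in Ioc (0:ℝ) T, ENNReal.ofReal (metricDeriv u r ^ p)) = 0 :=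
      le_zero_iff.1 (hsum ▸ le_self_add)
    rcases mul_eq_zero.1 h1 with h2 | h2
    · exfalso
      rw [ENNReal.ofReal_eq_zero] at h2
      have h3 : (0:ℝ) < 1/p := by positivity
      linarith
    · exact h2
  have hPp : ∀ᵐ x : ℝ,
      (Tendsto (fun y => ⨍ t in Icc x y, Mg t) (𝓝[>] x) (𝓝 (Mg x)) ∧
       Tendsto (fun y => ⨍ t in Icc y x, Mg t) (𝓝[<] x) (𝓝 (Mg x))) := by
    filter_upwards [(IsUnifLocDoublingMeasure.vitaliFamily (volume : Measure ℝ)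
      1).ae_tendsto_average hMgint.locallyIntegrable] with x hx
    exact ⟨hx.comp (Real.tendsto_Icc_vitaliFamily_right x),
      hx.comp (Real.tendsto_Icc_vitaliFamily_left x)⟩
  obtain ⟨N₀, hN₀sub, hN₀meas, hN₀null⟩ := exists_measurable_superset_of_null (ae_iff.1 hPp)
  have hLP : ∀ x : ℝ, x ∉ N₀ →
      (Tendsto (fun y => ⨍ t in Icc x y, Mg t) (𝓝[>] x) (𝓝 (Mg x)) ∧
       Tendsto (fun y => ⨍ t in Icc y x, Mg t) (𝓝[<] x) (𝓝 (Mg x))) := by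
    intro x hx
    by_contra hcon
    exact hx (hN₀sub hcon)
  have main : ∀ ε : ℝ, 0 < ε → dist (u a) (u b) ≤ ε * (b - a) + ε := by
    intro ε hε
    set S : ℝ → Set ℝ := fun δ => {r | r ∈ Ioo 0 T ∧ ∃ s', r < s' ∧ s' < min (r + δ) T ∧
        ε * (s' - r) < dist (u r) (u s')} with hSdef
    have hSopen : ∀ δ : ℝ, IsOpen (S δ) := by
      intro δ
      rw [isOpen_iff_mem_nhds]
      rintro r ⟨hrI, s', h1, h2, h3⟩
      have hcont : ContinuousAt u r := continuousAt_of_dist_le u Mg 0 T hMgint hACg hrI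
      have h2a : s' < r + δ := h2.trans_le (min_le_left _ _)
      have h2b : s' < T := h2.trans_le (min_le_right _ _)
      have e1 : ∀ᶠ x in 𝓝 r, x ∈ Ioo (0:ℝ) T := isOpen_Ioo.eventually_mem hrI
      have e2 : ∀ᶠ x in 𝓝 r, x < s' := eventually_lt_nhds h1
      have e3 : ∀ᶠ x in 𝓝 r, s' - δ < x := eventually_gt_nhds (by linarith)
      have e4 : ∀ᶠ x in 𝓝 r, ε * (s' - x) < dist (u x) (u s') := by
        have hc1 : ContinuousAt (fun x => dist (u x) (u s')) r :=
          hcont.dist continuousAt_const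
        have hc2 : ContinuousAt (fun x => ε * (s' - x)) r :=
          continuousAt_const.mul (continuousAt_const.sub continuousAt_id)
        exact hc2.eventually_lt hc1 h3
      filter_upwards [e1, e2, e3, e4] with x hx1 hx2 hx3 hx4
      exact ⟨hx1, s', hx2, lt_min (by linarith) h2b, hx4⟩
    set Bad : Set ℝ := ⋂ n : ℕ, S (1/(n+1)) with hBaddef
    have hBadmeas : MeasurableSet Bad :=
      MeasurableSet.iInter (fun n => (hSopen _).measurableSet)
    have hBadsub : Bad ⊆ Ioo 0 T := fun r hr => (mem_iInter.1 hr 0).1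
    have hq : ∀ r, r ∈ Bad → r ∉ N₀ → ε ≤ metricDeriv u r := by
      intro r hrB hrL
      have hrI : r ∈ Ioo 0 T := hBadsub hrB
      have hPr := hLP r hrL
      have hb1 : ∀ᶠ y in 𝓝[>] r, dist (u y) (u r) / |y - r| ≤ Mg r + 1 := by
        have h1 : ∀ᶠ y in 𝓝[>] r, ⨍ t in Icc r y, Mg t < Mg r + 1 :=
          hPr.1.eventually_lt_const (lt_add_one _)
        have h2 : Ioo r T ∈ 𝓝[>] r := Ioo_mem_nhdsGT_of_mem ⟨le_refl r, hrI.2⟩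
        filter_upwards [h1, h2] with y hy1 hy2
        have hry : r < y := hy2.1
        have havg : ∫ t in Icc r y, Mg t = (y - r) * ⨍ t in Icc r y, Mg t := by
          rw [setAverage_eq, Real.volume_real_Icc_of_le (by linarith),
            smul_eq_mul, ← mul_assoc, mul_inv_cancel₀ (by linarith), one_mul]
        have hd : dist (u y) (u r) ≤ (y - r) * ⨍ t in Icc r y, Mg t := by
          rw [← havg, dist_comm]
          refine (hACg r y hrI.1.le hry.le hy2.2.le).trans ?_
          rw [integral_Icc_eq_integral_Ioc]
        rw [abs_of_pos (by linarith), div_le_iff₀ (by linarith)]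
        nlinarith
      have hb2 : ∀ᶠ y in 𝓝[<] r, dist (u y) (u r) / |y - r| ≤ Mg r + 1 := by
        have h1 : ∀ᶠ y in 𝓝[<] r, ⨍ t in Icc y r, Mg t < Mg r + 1 :=
          hPr.2.eventually_lt_const (lt_add_one _)
        have h2 : Ioo (0:ℝ) r ∈ 𝓝[<] r := Ioo_mem_nhdsLT_of_mem ⟨hrI.1, le_refl r⟩
        filter_upwards [h1, h2] with y hy1 hy2
        have hyr : y < r := hy2.2
        have havg : ∫ t in Icc y r, Mg t = (r - y) * ⨍ t in Icc y r, Mg t := by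
          rw [setAverage_eq, Real.volume_real_Icc_of_le (by linarith),
            smul_eq_mul, ← mul_assoc, mul_inv_cancel₀ (by linarith), one_mul]
        have hd : dist (u y) (u r) ≤ (r - y) * ⨍ t in Icc y r, Mg t := by
          rw [← havg]
          refine (hACg y r hy2.1.le hyr.le hrI.2.le).trans ?_
          rw [integral_Icc_eq_integral_Ioc]
        rw [abs_of_neg (by linarith), div_le_iff₀ (by linarith)]
        nlinarith
      have hbdd : Filter.IsBoundedUnder (· ≤ ·) (𝓝[≠] r)
          (fun y => dist (u y) (u r) / |y - r|) := by
        refine ⟨Mg r + 1, ?_⟩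
        rw [Filter.eventually_map, ← nhdsLT_sup_nhdsGT r]
        exact Filter.eventually_sup.2 ⟨hb2, hb1⟩
      have hfreq : ∃ᶠ y in 𝓝[≠] r, ε ≤ dist (u y) (u r) / |y - r| := by
        rw [Filter.frequently_iff]
        intro V hV
        obtain ⟨ρ, hρ, hball⟩ := Metric.mem_nhdsWithin_iff.1 hV
        obtain ⟨n, hn⟩ := exists_nat_one_div_lt hρ
        obtain ⟨-, s', hs1, hs2, hs3⟩ := mem_iInter.1 hrB n
        have hs2a : s' < r + 1/(n+1) := hs2.trans_le (min_le_left _ _)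
        refine ⟨s', hball ⟨?_, hs1.ne'⟩, ?_⟩
        · rw [Metric.mem_ball, Real.dist_eq, abs_of_pos (by linarith)]
          linarith
        · rw [abs_of_pos (by linarith), le_div_iff₀ (by linarith), dist_comm]
          linarith
      exact le_limsup_of_frequently_le hfreq hbdd
    have hBadnull : volume Bad = 0 := by
      set K := ENNReal.ofReal (ε ^ p) with hKdef
      have hKne : K ≠ 0 := by
        rw [hKdef, Ne, ENNReal.ofReal_eq_zero, not_le]
        exact Real.rpow_pos_of_pos hε p
      set E : Set ℝ := Bad ∩ N₀ᶜ with hEdef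
      have hEmeas : MeasurableSet E := hBadmeas.inter hN₀meas.compl
      have hle : K * volume (E ∩ Ioc 0 T) ≤
          ∫⁻ r in Ioc (0:ℝ) T, ENNReal.ofReal (metricDeriv u r ^ p) := by
        have heq : K * volume (E ∩ Ioc 0 T) =
            ∫⁻ r, E.indicator (fun _ => K) r ∂(volume.restrict (Ioc 0 T)) := by
          rw [lintegral_indicator hEmeas, setLIntegral_const,
            Measure.restrict_apply hEmeas]
        rw [heq]
        refine lintegral_mono (fun r => ?_)
        by_cases hr : r ∈ E
        · rw [Set.indicator_of_mem hr]
          exact ENNReal.ofReal_le_ofReal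
            (Real.rpow_le_rpow hε.le (hq r hr.1 hr.2) (by linarith))
        · rw [Set.indicator_of_notMem hr]
          exact zero_le
      rw [hI1] at hle
      have hE0 : volume (E ∩ Ioc 0 T) = 0 := by
        rcases mul_eq_zero.1 (le_zero_iff.1 hle) with h2 | h2
        · exact absurd h2 hKne
        · exact h2
      have hsubB : Bad ⊆ (E ∩ Ioc 0 T) ∪ N₀ := by
        intro r hr
        by_cases hrN : r ∈ N₀
        · exact Or.inr hrN
        · exact Or.inl ⟨⟨hr, hrN⟩, Ioo_subset_Ioc_self (hBadsub hr)⟩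
      refine le_antisymm ?_ zero_le
      calc volume Bad ≤ volume ((E ∩ Ioc 0 T) ∪ N₀) := measure_mono hsubB
        _ ≤ volume (E ∩ Ioc 0 T) + volume N₀ := measure_union_le _ _
        _ = 0 := by rw [hE0, hN₀null, add_zero]
    have hfinint : ∫⁻ x, ENNReal.ofReal (Mg x) ∂volume ≠ ⊤ := by
      refine (lt_of_le_of_lt (lintegral_mono fun x => Real.ofReal_le_enorm (Mg x))
        hMgint.hasFiniteIntegral).ne
    obtain ⟨δ, hδpos, hδ⟩ := exists_pos_setLIntegral_lt_of_measure_lt hfinint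
      (ENNReal.ofReal_pos.2 hε).ne'
    obtain ⟨O, hOsub, hOopen, hOvol⟩ := Set.exists_isOpen_lt_of_lt Bad δ (hBadnull ▸ hδpos)
    have hACab : ∀ s t : ℝ, a ≤ s → s ≤ t → t ≤ b →
        dist (u s) (u t) ≤ ∫ r in Ioc s t, Mg r :=
      fun s t hs hst htb => hACg s t (h0a.le.trans hs) hst (htb.trans hbT.le)
    have hgood : ∀ r, r ∈ Ico a b → r ∉ O →
        ∃ s', r < s' ∧ s' ≤ b ∧ dist (u r) (u s') ≤ ε * (s' - r) := by
      intro r hr hrO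
      have hrB : r ∉ Bad := fun hcon => hrO (hOsub hcon)
      have hrI : r ∈ Ioo 0 T := ⟨h0a.trans_le hr.1, hr.2.trans hbT⟩
      rw [hBaddef, mem_iInter] at hrB
      push_neg at hrB
      obtain ⟨n, hn⟩ := hrB
      have hδn : (0:ℝ) < 1/(n+1) := by positivity
      have hrb : r < b := hr.2
      refine ⟨min (r + 1/(n+1)/2) ((r + b)/2), lt_min (by linarith) (by linarith),
        (min_le_right _ _).trans (by linarith), ?_⟩
      set s' := min (r + 1/(n+1)/2) ((r + b)/2) with hs'def
      have h1 : r < s' := lt_min (by linarith) (by linarith)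
      have h2 : s' ≤ b := (min_le_right _ _).trans (by linarith)
      have h3 : s' < min (r + 1/(n+1)) T :=
        lt_min ((min_le_left _ _).trans_lt (by linarith)) (h2.trans_lt hbT)
      by_contra hlt
      push_neg at hlt
      exact hn ⟨hrI, s', h1, h3, hlt⟩
    have hkey := key_dist_bound u Mg a b hab hMgint hMgnn hACab O hOopen ε hε hgood
    have hOint : ∫ r in Ioc a b ∩ O, Mg r ≤ ε := by
      have h1 : ∫ r in Ioc a b ∩ O, Mg r =
          (∫⁻ r in Ioc a b ∩ O, ENNReal.ofReal (Mg r)).toReal := by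
        rw [integral_eq_lintegral_of_nonneg_ae (Filter.Eventually.of_forall hMgnn)
          hMgint.aestronglyMeasurable.restrict]
      rw [h1]
      have h2 : ∫⁻ r in Ioc a b ∩ O, ENNReal.ofReal (Mg r) ≤
          ∫⁻ r in O, ENNReal.ofReal (Mg r) :=
        lintegral_mono' (Measure.restrict_mono inter_subset_right le_rfl) le_rfl
      exact ENNReal.toReal_le_of_le_ofReal hε.le (h2.trans (hδ O hOvol).le)
    linarith
  have hfinal : dist (u a) (u b) ≤ 0 := by
    by_contra hpos
    push_neg at hpos
    have hba : (0:ℝ) < b - a + 1 := by linarith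
    have hε : 0 < dist (u a) (u b) / (2 * (b - a + 1)) := by positivity
    have h1 := main _ hε
    have h2 : dist (u a) (u b) / (2 * (b - a + 1)) * (b - a) +
        dist (u a) (u b) / (2 * (b - a + 1)) =
        dist (u a) (u b) / (2 * (b - a + 1)) * (b - a + 1) := by ring
    have h3 : dist (u a) (u b) / (2 * (b - a + 1)) * (b - a + 1) =
        dist (u a) (u b) / 2 := by
      field_simp
    nlinarith
  exact (dist_le_zero.1 hfinal).symm

private lemma const_isGeneralizedSolution (σ : TopologicalSpace U) (φ : U → EReal) {p : ℝ}
    (hp : 1 < p) (x : U) (y : ℝ) (hxy : φ x ≤ (y : EReal))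
    (hslope : weakRelaxedSlope σ φ x y = 0) :
    IsGeneralizedSolution σ φ p (fun _ => x) (fun _ => y) := by
  have hppos : 0 < p := by linarith
  have hcp : 0 < conjExp p := div_pos (by linarith) (by linarith)
  refine ⟨?_, ?_, fun t _ => hxy⟩
  · intro T hT
    refine ⟨fun _ => 0, ?_, ?_⟩
    · exact MemLp.zero'
    · intro s t h0s hst
      simp
  · intro s t h0s hst
    refine ⟨le_refl _, ?_⟩
    have hmd : ∀ r : ℝ, metricDeriv (fun _ : ℝ => x) r = 0 := by
      intro r
      unfold metricDeriv
      simp only [dist_self, zero_div]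
      exact limsup_const 0
    have h1 : ∀ r : ℝ, ENNReal.ofReal (metricDeriv (fun _ : ℝ => x) r ^ p) = 0 := by
      intro r
      rw [hmd r, Real.zero_rpow hppos.ne', ENNReal.ofReal_zero]
    have h2 : weakRelaxedSlope σ φ x y ^ conjExp p = (0:ℝ≥0∞) := by
      rw [hslope]
      exact ENNReal.zero_rpow_of_pos hcp
    simp only [h1, h2, lintegral_zero, mul_zero, add_zero, zero_add, sub_self,
      ENNReal.ofReal_zero, le_refl]

end Aux


/-- **Proposition (Lyapunov function and rest points).**
Under the standing assumptions: (i) the projection `π₂ : X → ℝ` is a Lyapunov function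
for the generalized semiflow `S` of generalized solutions; (ii) the set of rest points
of `S` is exactly `Z(S) = {(ū,φ̄) ∈ X : |∂⁻φ|(ū,φ̄) = 0}`. -/
theorem lyapunov_and_rest_points_generalized
    {U : Type*} [MetricSpace U] (σ : TopologicalSpace U) (dσ : U → U → ℝ)
    (φ : U → EReal) (p : ℝ)
    (h : StandingAssumptions σ dσ φ p) :
    IsLyapunov (phaseDist dσ φ) (genSolSet σ φ p) (fun x => x.1.2) ∧
    { x : Phase φ | IsRestPoint (genSolSet σ φ p) x }
      = { x : Phase φ | weakRelaxedSlope σ φ x.1.1 x.1.2 = 0 } := by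
  have hp := h.p_gt
  constructor
  · refine ⟨?_, ?_, ?_⟩
    · -- continuity of V
      intro x xn hconv
      have hdnn : ∀ u v : U, 0 ≤ dσ u v := by
        intro u v
        have h1 := (h.dσ_eq_zero u u).2 rfl
        have h2 := h.dσ_triangle u v u
        have h3 := h.dσ_symm u v
        linarith
      rw [tendsto_iff_dist_tendsto_zero]
      refine squeeze_zero (fun n => dist_nonneg) (fun n => ?_) hconv
      rw [Real.dist_eq]
      have h1 := hdnn (xn n).1.1 x.1.1
      have h2 : phaseDist dσ φ (xn n) x =
          dσ (xn n).1.1 x.1.1 + |(xn n).1.2 - x.1.2| := rfl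
      rw [h2]
      linarith
    · -- monotonicity of V along solutions
      rintro g ⟨u, c, hsol, hval⟩ s t hst
      have h1 := congrArg Prod.snd (hval s)
      have h2 := congrArg Prod.snd (hval t)
      show (g t).1.2 ≤ (g s).1.2
      rw [h1, h2]
      exact (hsol.2.1 (s : ℝ) (t : ℝ) s.coe_nonneg (NNReal.coe_le_coe.2 hst)).1
    · -- complete orbits with constant V are stationary
      intro w hw hV
      have main : ∀ s t : ℝ, s ≤ t → w s = w t := by
        intro s t hst
        obtain ⟨u, c, hsol, hval⟩ := hw (s - 1)
        have huc : ∀ x : ℝ, 0 ≤ x → (w (s - 1 + x)).1 = (u x, c x) := by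
          intro x hx
          have h1 := hval x.toNNReal
          simp only [Real.coe_toNNReal x hx] at h1
          exact h1
        have hcc : ∀ x y : ℝ, 0 ≤ x → 0 ≤ y → c x = c y := by
          intro x y hx hy
          have h1 : (w (s - 1 + x)).1.2 = c x := by rw [huc x hx]
          have h2 : (w (s - 1 + y)).1.2 = c y := by rw [huc y hy]
          rw [← h1, ← h2]
          exact hV (s - 1 + x) (s - 1 + y)
        have hub : u (1 + (t - s)) = u 1 :=
          gen_sol_const σ φ hp u c hsol hcc (a := 1) (b := 1 + (t - s)) (T := (t - s) + 2)
            one_pos (by linarith) (by linarith)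
        have h1 : (w s).1 = (u 1, c 1) := by
          have h3 := huc 1 zero_le_one
          rwa [show s - 1 + 1 = s by ring] at h3
        have h2 : (w t).1 = (u (1 + (t - s)), c (1 + (t - s))) := by
          have h3 := huc (1 + (t - s)) (by linarith)
          rwa [show s - 1 + (1 + (t - s)) = t by ring] at h3
        apply Subtype.ext
        rw [h1, h2, hub, hcc (1 + (t - s)) 1 (by linarith) zero_le_one]
      intro s t
      rcases le_total s t with hle | hle
      · exact main s t hle
      · exact (main t s hle).symm
  · ext x
    simp only [mem_setOf_eq]
    constructor
    · intro hx
      have hmem := hx 0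
      obtain ⟨u, c, hsol, hval⟩ := hmem
      have hu : ∀ r : ℝ, 0 ≤ r → u r = x.1.1 ∧ c r = x.1.2 := by
        intro r hr
        have h1 := hval r.toNNReal
        simp only [Real.coe_toNNReal r hr] at h1
        exact ⟨(congrArg Prod.fst h1).symm, (congrArg Prod.snd h1).symm⟩
      have hE := hsol.2.1 0 1 le_rfl zero_le_one
      have hcp : 0 < conjExp p := div_pos (by linarith) (by linarith)
      have hI2 : ∫⁻ r in Ioc (0:ℝ) 1, weakRelaxedSlope σ φ (u r) (c r) ^ (conjExp p) = 0 := by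
        have h0 : ENNReal.ofReal (c 0 - c 1) = 0 := by
          rw [(hu 0 le_rfl).2, (hu 1 zero_le_one).2, sub_self, ENNReal.ofReal_zero]
        have hsum := le_antisymm (h0 ▸ hE.2) zero_le
        have h1 : ENNReal.ofReal (1/(conjExp p)) *
            (∫⁻ r in Ioc (0:ℝ) 1, weakRelaxedSlope σ φ (u r) (c r) ^ (conjExp p)) = 0 :=
          le_zero_iff.1 (hsum ▸ le_add_self)
        rcases mul_eq_zero.1 h1 with h2 | h2
        · exfalso
          rw [ENNReal.ofReal_eq_zero] at h2
          have h3 : (0:ℝ) < 1/(conjExp p) := by positivity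
          linarith
        · exact h2
      have hcongr : ∫⁻ r in Ioc (0:ℝ) 1, weakRelaxedSlope σ φ (u r) (c r) ^ (conjExp p) =
          weakRelaxedSlope σ φ x.1.1 x.1.2 ^ (conjExp p) * volume (Ioc (0:ℝ) 1) := by
        rw [setLIntegral_congr_fun_ae measurableSet_Ioc (ae_of_all _ (fun r hr => by
          rw [(hu r hr.1.le).1, (hu r hr.1.le).2])), setLIntegral_const]
      rw [hcongr, Real.volume_Ioc] at hI2
      simp only [sub_zero, ENNReal.ofReal_one, mul_one] at hI2
      rcases ENNReal.rpow_eq_zero_iff.1 hI2 with ⟨h1, _⟩ | ⟨_, h2⟩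
      · exact h1
      · linarith
    · intro hx s
      exact ⟨fun _ => x.1.1, fun _ => x.1.2,
        const_isGeneralizedSolution σ φ hp x.1.1 x.1.2 x.2 hx, fun τ => rfl⟩

end GradientFlowPaper
end
end

section
/- Assume the standing assumptions and the conditional continuity property (CONT). Then every generalized solution (u,φ̄) satisfies φ̄(t) = φ(u(t)) for almost every t ∈ (0,+∞), and the following energy inequality holds: for all t ≥ 0 and almost all s ∈ (0,t), (1/p)∫_s^t |u'|(r)^p dr + (1/p')∫_s^t |∂⁺φ|(u(r))^{p'} dr + φ(u(t)) ≤ φ(u(s)). -/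
open Filter MeasureTheory Set Topology
open scoped ENNReal NNReal Classical

noncomputable section

namespace GradientFlowPaper

section AuxProofs

variable {U : Type*} [MetricSpace U]

/-- Sequential continuity of an `AC^p` curve on `[0,T]`. -/
lemma acp_seq_cont {p T : ℝ} {u : ℝ → U} (hu : ACpOn p T u) (hp : 1 < p)
    {rn : ℕ → ℝ} {r : ℝ} (hmem : ∀ n, rn n ∈ Icc (0:ℝ) T) (hr : r ∈ Icc (0:ℝ) T)
    (htend : Tendsto rn atTop (𝓝 r)) :
    Tendsto (fun n => u (rn n)) atTop (𝓝 (u r)) := by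
  obtain ⟨m, hm, hd⟩ := hu
  have hT0 : (0:ℝ) ≤ T := hr.1.trans hr.2
  have hfin : IsFiniteMeasure (volume.restrict (Icc (0:ℝ) T)) :=
    ⟨by rw [Measure.restrict_apply_univ]; exact measure_Icc_lt_top⟩
  have hint : IntegrableOn m (Icc (0:ℝ) T) :=
    hm.integrable (by rw [ENNReal.one_le_ofReal]; linarith)
  set F : ℝ → ℝ := fun x => ∫ s in (0:ℝ)..x, m s with hF
  have hFc : ContinuousOn F (Icc (0:ℝ) T) := by
    have := intervalIntegral.continuousOn_primitive_interval
      (f := m) (μ := volume) (a := (0:ℝ)) (b := T) (by rwa [uIcc_of_le hT0])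
    rwa [uIcc_of_le hT0] at this
  have key : ∀ x y : ℝ, x ∈ Icc (0:ℝ) T → y ∈ Icc (0:ℝ) T →
      dist (u x) (u y) ≤ |F x - F y| := by
    have main : ∀ x y : ℝ, x ∈ Icc (0:ℝ) T → y ∈ Icc (0:ℝ) T → x ≤ y →
        dist (u x) (u y) ≤ |F x - F y| := by
      intro x y hx hy hxy
      have h1 : IntervalIntegrable m volume 0 x := by
        apply MeasureTheory.IntegrableOn.intervalIntegrable
        apply hint.mono_set
        rw [uIcc_of_le hx.1]
        exact Icc_subset_Icc le_rfl hx.2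
      have h2 : IntervalIntegrable m volume x y := by
        apply MeasureTheory.IntegrableOn.intervalIntegrable
        apply hint.mono_set
        rw [uIcc_of_le hxy]
        exact Icc_subset_Icc hx.1 hy.2
      have hadd := intervalIntegral.integral_add_adjacent_intervals h1 h2
      have hdy : dist (u x) (u y) ≤ F y - F x := by
        have := hd x y hx.1 hxy hy.2
        simp only [hF]
        linarith [hadd, this]
      calc dist (u x) (u y) ≤ F y - F x := hdy
        _ ≤ |F x - F y| := by rw [abs_sub_comm]; exact le_abs_self _
    intro x y hx hy
    rcases le_total x y with hxy | hxy
    · exact main x y hx hy hxy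
    · rw [dist_comm, abs_sub_comm]; exact main y x hy hx hxy
  have htn : Tendsto rn atTop (𝓝[Icc (0:ℝ) T] r) :=
    tendsto_nhdsWithin_of_tendsto_nhds_of_eventually_within rn htend
      (Eventually.of_forall hmem)
  have hFtend : Tendsto (fun n => F (rn n)) atTop (𝓝 (F r)) :=
    ((hFc r hr).tendsto).comp htn
  have habs : Tendsto (fun n => |F (rn n) - F r|) atTop (𝓝 0) := by
    have := hFtend.sub (tendsto_const_nhds (x := F r))
    simpa using this.abs
  rw [tendsto_iff_dist_tendsto_zero]
  exact squeeze_zero (fun n => dist_nonneg) (fun n => key (rn n) r (hmem n) hr) habs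

/-- If the weak relaxed slope at `(x,a)` is finite, then (CONT) forces `φ x = a`. -/
lemma cont_identification {σ : TopologicalSpace U} {φ : U → EReal}
    (hcont : CondCont σ φ) {x : U} {a : ℝ}
    (hW : weakRelaxedSlope σ φ x a ≠ ⊤) : φ x = (a : EReal) := by
  have hlt : weakRelaxedSlope σ φ x a < ⊤ := hW.lt_top
  rw [weakRelaxedSlope] at hlt
  obtain ⟨L, hLS, hL⟩ := sInf_lt_iff.1 hlt
  obtain ⟨un, h1, h2, h3⟩ := hLS
  rw [h3] at hL
  obtain ⟨C, hC⟩ := ENNReal.exists_nat_gt hL.ne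
  have hfreq : ∃ᶠ n in atTop, localSlope φ (un n) < (C : ℝ≥0∞) :=
    frequently_lt_of_liminf_lt (h := hC)
  have hev : ∀ᶠ n in atTop, φ (un n) < ((a + 1 : ℝ) : EReal) :=
    h2.eventually_lt_const (by exact_mod_cast (lt_add_one a))
  obtain ⟨k, hk, hkP⟩ := extraction_of_frequently_atTop (hev.and_frequently hfreq)
  set C' : ℝ := max (a + 1) (C : ℝ) with hC'
  have h1' : Tendsto (fun n => un (k n)) atTop (@nhds U σ x) := h1.comp hk.tendsto_atTop
  have h2' : Tendsto (fun n => φ (un (k n))) atTop (𝓝 ((a : EReal))) :=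
    h2.comp hk.tendsto_atTop
  have hbd : ∃ B : ℝ, ∀ n, φ (un (k n)) ≤ (B : EReal) ∧
      localSlope φ (un (k n)) ≤ ENNReal.ofReal B := by
    refine ⟨C', fun n => ⟨?_, ?_⟩⟩
    · refine ((hkP n).1.le).trans ?_
      exact_mod_cast le_max_left (a+1) (C:ℝ)
    · refine ((hkP n).2.le).trans ?_
      rw [show ((C : ℕ) : ℝ≥0∞) = ENNReal.ofReal ((C : ℕ) : ℝ) from
        (ENNReal.ofReal_natCast C).symm]
      exact ENNReal.ofReal_le_ofReal (le_max_right _ _)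
  exact tendsto_nhds_unique (hcont _ x h1' hbd) h2'

/-- Sublevel sets of `φ ∘ u` intersected with `Icc a T` are closed. -/
lemma sublevel_closed {σ : TopologicalSpace U} {dσ : U → U → ℝ} {φ : U → EReal} {p : ℝ}
    (h : StandingAssumptions σ dσ φ p) {T : ℝ} {u : ℝ → U} (hAC : ACpOn p T u)
    {a : ℝ} (ha : 0 ≤ a) (y : ℝ) :
    IsClosed {r : ℝ | r ∈ Icc a T ∧ φ (u r) ≤ (y : EReal)} := by
  have hsub : Icc a T ⊆ Icc (0:ℝ) T := Icc_subset_Icc ha le_rfl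
  apply IsSeqClosed.isClosed
  intro rn r hmem htend
  have hrIcc : r ∈ Icc a T :=
    isClosed_Icc.mem_of_tendsto htend (Eventually.of_forall fun n => (hmem n).1)
  have hu := acp_seq_cont hAC h.p_gt (fun n => hsub (hmem n).1) (hsub hrIcc) htend
  obtain ⟨w, k, hk, hwσ⟩ := h.compact_sublevels y (fun n => u (rn n)) (fun n => (hmem n).2)
  have hdist0 : Tendsto (fun n => dist (u (rn (k n))) (u r)) atTop (nhds (0:ℝ)) :=
    (tendsto_iff_dist_tendsto_zero.mp hu).comp hk.tendsto_atTop
  have hwr : w = u r := by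
    have hconst : Tendsto (fun _ : ℕ => u r) atTop (@nhds U σ (u r)) := tendsto_const_nhds
    have hld := h.d_σ_lsc _ _ _ _ hwσ hconst
    rw [hdist0.liminf_eq] at hld
    exact dist_le_zero.mp hld
  refine ⟨hrIcc, ?_⟩
  rw [← hwr]
  refine le_trans (h.σ_lsc _ _ hwσ) ?_
  have hll : liminf (fun n => φ (u (rn (k n)))) atTop ≤ liminf (fun _ : ℕ => ((y:ℝ):EReal)) atTop :=
    liminf_le_liminf (Eventually.of_forall fun n => (hmem (k n)).2)
  simpa using hll

end AuxProofs


/-- **Proposition (`φ̄ = φ ∘ u` for generalized solutions).**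
Under the standing assumptions and (CONT), every generalized solution `(u,φ̄)` satisfies
`φ̄(t) = φ(u(t))` for a.e. `t ∈ (0,∞)`, and the energy inequality with the strong
relaxed slope holds for all `t ≥ 0` and almost all `s ∈ (0,t)`. -/
theorem generalized_solution_energy_identification
    {U : Type*} [MetricSpace U] (σ : TopologicalSpace U) (dσ : U → U → ℝ)
    (φ : U → EReal) (p : ℝ)
    (h : StandingAssumptions σ dσ φ p)
    (hcont : CondCont σ φ) :
    ∀ (u : ℝ → U) (c : ℝ → ℝ), IsGeneralizedSolution σ φ p u c →
      (∀ᵐ t ∂(volume : Measure ℝ), 0 < t → (c t : EReal) = φ (u t)) ∧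
      ∀ t : ℝ, 0 ≤ t → ∀ᵐ s ∂(volume : Measure ℝ), s ∈ Ioo (0:ℝ) t →
        (φ (u t)).toReal ≤ (φ (u s)).toReal ∧
        ENNReal.ofReal (1/p) * (∫⁻ r in Ioc s t, ENNReal.ofReal (metricDeriv u r ^ p)) +
          ENNReal.ofReal (1/(conjExp p)) *
            (∫⁻ r in Ioc s t, strongRelaxedSlope σ φ (u r) ^ (conjExp p)) ≤
          ENNReal.ofReal ((φ (u s)).toReal - (φ (u t)).toReal) := by
  rintro u c ⟨hAC, hineq, hle⟩
  have hp : 1 < p := h.p_gt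
  have hp'pos : 0 < conjExp p := div_pos (by linarith) (by linarith)
  have hc_mono : ∀ s t : ℝ, 0 ≤ s → s ≤ t → c t ≤ c s := fun s t hs hst =>
    (hineq s t hs hst).1
  have hne_bot : ∀ v, φ v ≠ ⊥ := h.proper.2
  have hne_top : ∀ t : ℝ, 0 ≤ t → φ (u t) ≠ ⊤ := fun t ht =>
    (lt_of_le_of_lt (hle t ht) (EReal.coe_lt_top _)).ne
  -- where `φ∘u ≠ c`, the weak relaxed slope is infinite
  have hWtop : ∀ r : ℝ, φ (u r) ≠ (c r : EReal) →
      weakRelaxedSlope σ φ (u r) (c r) = ⊤ := by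
    intro r hne
    by_contra hW
    exact hne (cont_identification hcont hW)
  -- finiteness of the weak-slope integral
  have hIfin : ∀ T : ℝ, 0 ≤ T →
      (∫⁻ r in Ioc (0:ℝ) T, weakRelaxedSlope σ φ (u r) (c r) ^ (conjExp p)) < ⊤ := by
    intro T hT
    have h2 := (hineq 0 T le_rfl hT).2
    have hb : ENNReal.ofReal (1/(conjExp p)) *
        (∫⁻ r in Ioc (0:ℝ) T, weakRelaxedSlope σ φ (u r) (c r) ^ (conjExp p)) ≤
        ENNReal.ofReal (c 0 - c T) := le_trans le_add_self h2
    by_contra hI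
    rw [not_lt, top_le_iff] at hI
    rw [hI, ENNReal.mul_top
      (ENNReal.ofReal_pos.mpr (one_div_pos.mpr hp'pos)).ne'] at hb
    exact absurd hb (not_le.mpr ENNReal.ofReal_lt_top)
  -- the pieces of the bad set are null
  have hnull : ∀ n : ℕ, volume ({r : ℝ | φ (u r) ≠ (c r : EReal)} ∩
      Icc ((n:ℝ)+1)⁻¹ ((n:ℝ)+1)) = 0 := by
    intro n
    set a : ℝ := ((n:ℝ)+1)⁻¹ with ha_def
    set T : ℝ := (n:ℝ)+1 with hT_def
    have hT1 : (1:ℝ) ≤ T := by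
      rw [hT_def]; linarith [Nat.cast_nonneg (α := ℝ) n]
    have ha : 0 < a := by positivity
    set E := {r : ℝ | φ (u r) ≠ (c r : EReal)} ∩ Icc a T with hE_def
    have hE_pos : ∀ r ∈ E, 0 < r := fun r hr => lt_of_lt_of_le ha hr.2.1
    have hc'anti : Antitone (fun r : ℝ => c (max r 0)) := by
      intro x y hxy
      exact hc_mono (max x 0) (max y 0) (le_max_right _ _) (max_le_max hxy le_rfl)
    have hc'meas : Measurable (fun r : ℝ => c (max r 0)) := hc'anti.measurable
    have hEmeas : MeasurableSet E := by
      have hEq : E = ⋃ q : ℚ, ({r : ℝ | r ∈ Icc a T ∧ φ (u r) ≤ ((q:ℝ) : EReal)} ∩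
          {r : ℝ | ((q:ℝ) : ℝ) < c (max r 0)}) := by
        ext r
        constructor
        · rintro ⟨hne, hIcc⟩
          have hr0 : 0 < r := lt_of_lt_of_le ha hIcc.1
          have hφle : φ (u r) ≤ (c r : EReal) := hle r hr0.le
          have hlt : φ (u r) < (c r : EReal) := lt_of_le_of_ne hφle hne
          have hfin : φ (u r) ≠ ⊤ := ne_top_of_lt hlt
          have hx : φ (u r) = (((φ (u r)).toReal : ℝ) : EReal) :=
            (EReal.coe_toReal hfin (hne_bot _)).symm
          have hxlt : (φ (u r)).toReal < c r := by
            rw [hx] at hlt; exact_mod_cast hlt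
          obtain ⟨q, hq1, hq2⟩ := exists_rat_btwn hxlt
          refine mem_iUnion.2 ⟨q, ⟨⟨hIcc, ?_⟩, ?_⟩⟩
          · rw [hx]; exact_mod_cast hq1.le
          · simp only [mem_setOf_eq]; rw [max_eq_left hr0.le]; exact hq2
        · intro hr
          obtain ⟨q, ⟨⟨hIcc, hq1⟩, hq2⟩⟩ := mem_iUnion.1 hr
          have hr0 : 0 < r := lt_of_lt_of_le ha hIcc.1
          rw [mem_setOf_eq, max_eq_left hr0.le] at hq2
          refine ⟨?_, hIcc⟩
          have : φ (u r) < (c r : EReal) :=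
            lt_of_le_of_lt hq1 (by exact_mod_cast hq2)
          exact this.ne
      rw [hEq]
      refine MeasurableSet.iUnion fun q => MeasurableSet.inter ?_ ?_
      · exact (sublevel_closed h (hAC T (by rw [hT_def]; positivity)) ha.le (q:ℝ)).measurableSet
      · exact hc'meas measurableSet_Ioi
    -- the indicator bound
    have hpt : ∀ r : ℝ, E.indicator (fun _ => (⊤:ℝ≥0∞)) r ≤
        weakRelaxedSlope σ φ (u r) (c r) ^ conjExp p := by
      intro r
      by_cases hr : r ∈ E
      · rw [indicator_of_mem hr, hWtop r hr.1, ENNReal.top_rpow_of_pos hp'pos]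
      · rw [indicator_of_notMem hr]; exact zero_le
    have hEsub : E ⊆ Ioc (0:ℝ) T := fun r hr => ⟨hE_pos r hr, hr.2.2⟩
    have hkey : ⊤ * volume E ≤
        ∫⁻ r in Ioc (0:ℝ) T, weakRelaxedSlope σ φ (u r) (c r) ^ conjExp p := by
      have h1 : (∫⁻ r in Ioc (0:ℝ) T, E.indicator (fun _ => (⊤:ℝ≥0∞)) r) = ⊤ * volume E := by
        rw [lintegral_indicator hEmeas, setLIntegral_const,
          Measure.restrict_apply hEmeas, inter_eq_self_of_subset_left hEsub]
      rw [← h1]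
      exact lintegral_mono hpt
    by_contra hvE
    have hlt := lt_of_le_of_lt hkey (hIfin T (by rw [hT_def]; positivity))
    rw [ENNReal.top_mul hvE] at hlt
    exact absurd hlt (lt_irrefl ⊤)
  -- first conclusion
  have part1 : ∀ᵐ t ∂(volume : Measure ℝ), 0 < t → (c t : EReal) = φ (u t) := by
    rw [ae_iff]
    refine measure_mono_null ?_ (measure_iUnion_null fun n => hnull n)
    intro r hr
    simp only [mem_setOf_eq, not_forall] at hr
    obtain ⟨hr0, hrne⟩ := hr
    obtain ⟨n, hn⟩ := exists_nat_ge (max r r⁻¹)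
    have hrinv : r⁻¹ ≤ (n:ℝ) + 1 :=
      le_trans (le_max_right _ _) (hn.trans (le_add_of_nonneg_right zero_le_one))
    have hrle : r ≤ (n:ℝ) + 1 :=
      le_trans (le_max_left _ _) (hn.trans (le_add_of_nonneg_right zero_le_one))
    have hinvle : ((n:ℝ)+1)⁻¹ ≤ r := by
      rw [inv_le_comm₀ (by positivity) hr0]
      exact hrinv
    exact mem_iUnion.2 ⟨n, ⟨fun hh => hrne hh.symm, ⟨hinvle, hrle⟩⟩⟩
  refine ⟨part1, fun t ht => ?_⟩
  -- second conclusion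
  filter_upwards [part1] with s hs hmem
  obtain ⟨hs0, hst⟩ := hmem
  have hcs : (c s : EReal) = φ (u s) := hs hs0
  have hsval : (φ (u s)).toReal = c s := by rw [← hcs, EReal.toReal_coe]
  have htval : (φ (u t)).toReal ≤ c t := by
    have h1 : φ (u t) ≤ (c t : EReal) := hle t ht
    have h2 := EReal.toReal_le_toReal h1 (hne_bot _) (EReal.coe_ne_top _)
    simpa using h2
  constructor
  · rw [hsval]
    exact htval.trans (hc_mono s t hs0.le hst.le)
  · have h2 := (hineq s t hs0.le hst.le).2
    have heqint : (∫⁻ r in Ioc s t, strongRelaxedSlope σ φ (u r) ^ conjExp p)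
        = ∫⁻ r in Ioc s t, weakRelaxedSlope σ φ (u r) (c r) ^ conjExp p := by
      apply lintegral_congr_ae
      have hae1 : ∀ᵐ r ∂(volume.restrict (Ioc s t)), 0 < r → (c r : EReal) = φ (u r) :=
        ae_restrict_of_ae part1
      have hae2 : ∀ᵐ r ∂(volume.restrict (Ioc s t)), r ∈ Ioc s t :=
        ae_restrict_mem measurableSet_Ioc
      filter_upwards [hae1, hae2] with r h1 hmem2
      have hr0 : 0 < r := lt_trans hs0 hmem2.1
      have hcr : φ (u r) = ((c r : ℝ) : EReal) := (h1 hr0).symm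
      simp only [strongRelaxedSlope, weakRelaxedSlope, hcr]
    rw [heqint]
    refine h2.trans (ENNReal.ofReal_le_ofReal ?_)
    linarith [htval, hsval.ge]

end GradientFlowPaper
end
end

section
/- Let (U,d) be a metric space and φ : U → (−∞,+∞] a proper, d-lower semicontinuous functional which is (λ,p)-geodesically convex for some λ ∈ ℝ and p ∈ (1,∞). Then φ satisfies the conditional continuity property with respect to the metric topology: whenever d(u_n,u) → 0 and sup_n max{φ(u_n), |∂φ|(u_n)} < +∞, one has φ(u_n) → φ(u). -/
open Filter MeasureTheory Set Topology
open scoped ENNReal NNReal Classical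

noncomputable section

namespace GradientFlowPaper

section AuxKeyBound

variable {U : Type*} [MetricSpace U]

private lemma key_bound (φ : U → EReal) (lam p C' : ℝ) (hp : 1 < p) (hC' : 0 < C')
    (hbot : ∀ w : U, φ w ≠ ⊥) (hconv : GeodConvex φ lam p)
    (x u : U) (hx : φ x ≠ ⊤) (hu : φ u ≠ ⊤)
    (r : ℝ) (hr : 0 < r)
    (hs : ∀ v : U, v ≠ x → dist x v < r → (φ x - φ v).toReal / dist x v < C') :
    (φ x).toReal ≤ (φ u).toReal + |lam / p| * dist x u ^ p + C' * dist x u := by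
  set a := (φ x).toReal with ha
  set b := (φ u).toReal with hb
  have hxe : ((a : ℝ) : EReal) = φ x := EReal.coe_toReal hx (hbot x)
  have hue : ((b : ℝ) : EReal) = φ u := EReal.coe_toReal hu (hbot u)
  set d := dist x u with hd
  rcases eq_or_lt_of_le dist_nonneg (b := d) with hd0 | hd0
  · -- d = 0, so x = u
    have hxu : x = u := by rw [← dist_eq_zero, ← hd, ← hd0]
    have hab : a = b := by rw [ha, hb, hxu]
    have hdp0 : d ^ p = 0 := by rw [← hd0]; exact Real.zero_rpow (by positivity)
    rw [hab, hdp0, ← hd0]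
    simp
  · obtain ⟨γ, h0, h1, hgeo, hcvx⟩ := hconv x u hx hu
    rw [h0, h1] at hgeo hcvx
    set t := min (1/2 : ℝ) (r / (2 * d)) with htdef
    have ht0 : 0 < t := lt_min (by norm_num) (by positivity)
    have ht1 : t ≤ 1/2 := min_le_left _ _
    have htd : t * d < r := by
      calc t * d ≤ (r / (2 * d)) * d := by
            exact mul_le_mul_of_nonneg_right (min_le_right _ _) hd0.le
        _ = r / 2 := by field_simp
        _ < r := by linarith
    have hdist : dist x (γ t) = t * d := by
      have := hgeo 0 t le_rfl ht0.le (by linarith)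
      rw [h0] at this; simpa using this
    have hγne : γ t ≠ x := by
      intro h
      rw [h, dist_self] at hdist
      exact absurd hdist.symm (by positivity)
    -- convexity bound
    have hcvx' := hcvx t ht0.le (by linarith)
    rw [← hxe, ← hue, ← EReal.coe_mul, ← EReal.coe_mul, ← EReal.coe_add,
      ← EReal.coe_sub] at hcvx'
    set R := (1 - t) * a + t * b - lam / p * t * (1 - t) * d ^ p with hR
    have hγtop : φ (γ t) ≠ ⊤ := (lt_of_le_of_lt hcvx' (EReal.coe_lt_top R)).ne
    have hgR : (φ (γ t)).toReal ≤ R := by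
      have := EReal.toReal_le_toReal hcvx' (hbot _) (EReal.coe_ne_top R)
      simpa using this
    set g := (φ (γ t)).toReal with hg
    have hge : ((g : ℝ) : EReal) = φ (γ t) := EReal.coe_toReal hγtop (hbot _)
    -- slope bound
    have hslope := hs (γ t) hγne (by rw [hdist]; exact htd)
    rw [hdist] at hslope
    have hsub : (φ x - φ (γ t)).toReal = a - g := by
      rw [← hxe, ← hge, ← EReal.coe_sub, EReal.toReal_coe]
    rw [hsub, div_lt_iff₀ (by positivity)] at hslope
    -- combine
    have hdp : (0:ℝ) ≤ d ^ p := Real.rpow_nonneg hd0.le p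
    have habs : -(lam / p) * (1 - t) ≤ |lam / p| := by
      nlinarith [abs_nonneg (lam / p), neg_abs_le (lam / p), le_abs_self (lam / p)]
    have key : a - g < C' * (t * d) := hslope
    rw [hR] at hgR
    have : t * a ≤ t * b + (-(lam / p) * (1 - t)) * (t * d ^ p) + C' * (t * d) := by
      nlinarith
    have h2 : a ≤ b + (-(lam / p) * (1 - t)) * d ^ p + C' * d :=
      le_of_mul_le_mul_left (by nlinarith [this]) ht0
    calc a ≤ b + (-(lam / p) * (1 - t)) * d ^ p + C' * d := h2
      _ ≤ b + |lam / p| * d ^ p + C' * d := by nlinarith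


end AuxKeyBound

/-- **Remark (Geodesic convexity implies conditional continuity).**
If `φ` is proper, `d`-lower semicontinuous and `(λ,p)`-geodesically convex, then `φ`
satisfies the conditional continuity property with respect to the metric topology. -/
theorem geodesically_convex_implies_conditional_continuity
    {U : Type*} [MetricSpace U] (φ : U → EReal) (lam p : ℝ) (hp : 1 < p)
    (hproper : (∃ u : U, φ u ≠ ⊤) ∧ ∀ u : U, φ u ≠ ⊥)
    (hlsc : LowerSemicontinuous φ)
    (hconv : GeodConvex φ lam p) :
    ∀ (un : ℕ → U) (u : U),
      Filter.Tendsto (fun n => dist (un n) u) Filter.atTop (nhds (0:ℝ)) →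
      (∃ C : ℝ, ∀ n, φ (un n) ≤ (C : EReal) ∧ localSlope φ (un n) ≤ ENNReal.ofReal C) →
      Filter.Tendsto (fun n => φ (un n)) Filter.atTop (nhds (φ u)) := by
  intro un u hdist hCex
  obtain ⟨C, hC⟩ := hCex
  have hbot := hproper.2
  have htend : Tendsto un atTop (𝓝 u) := tendsto_iff_dist_tendsto_zero.2 hdist
  have huntop : ∀ n, φ (un n) ≠ ⊤ := fun n => ((hC n).1.trans_lt (EReal.coe_lt_top C)).ne
  -- liminf lower bound from lower semicontinuity
  have hliminf : φ u ≤ liminf (fun n => φ (un n)) atTop := by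
    rw [le_liminf_iff]
    intro y hy
    exact htend.eventually (hlsc u y hy)
  have hutop : φ u ≠ ⊤ := by
    intro h
    have h1 : liminf (fun n => φ (un n)) atTop ≤ (C : EReal) := by
      have := Filter.liminf_le_liminf (f := (atTop : Filter ℕ)) (Filter.Eventually.of_forall fun n => (hC n).1)
        (by isBoundedDefault) (by isBoundedDefault)
      simpa [Filter.liminf_const] using this
    exact absurd ((h ▸ hliminf).trans h1) (by simp)
  -- the per-n upper bound
  set C' := max C 0 + 1 with hC'def
  have hC'pos : (0:ℝ) < C' := by positivity
  have hbound : ∀ n, (φ (un n)).toReal ≤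
      (φ u).toReal + |lam / p| * dist (un n) u ^ p + C' * dist (un n) u := by
    intro n
    have hsl : localSlope φ (un n) < ENNReal.ofReal C' := by
      refine lt_of_le_of_lt ((hC n).2.trans (ENNReal.ofReal_le_ofReal (le_max_left C 0))) ?_
      rw [ENNReal.ofReal_lt_ofReal_iff hC'pos]
      linarith [le_max_right C 0]
    have hev : ∀ᶠ v in 𝓝[≠] (un n),
        ENNReal.ofReal ((φ (un n) - φ v).toReal / dist (un n) v) < ENNReal.ofReal C' :=
      Filter.eventually_lt_of_limsup_lt hsl
    rw [eventually_nhdsWithin_iff] at hev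
    rw [Metric.eventually_nhds_iff] at hev
    obtain ⟨r, hr, hball⟩ := hev
    refine key_bound φ lam p C' hp hC'pos hbot hconv (un n) u (huntop n) hutop r hr ?_
    intro v hv hvd
    have := hball (show dist v (un n) < r by rwa [dist_comm]) hv
    rw [ENNReal.ofReal_lt_ofReal_iff hC'pos] at this
    exact this
  -- limsup upper bound
  set bseq := fun n => (φ u).toReal + |lam / p| * dist (un n) u ^ p + C' * dist (un n) u
    with hbseq
  have hbtend : Tendsto bseq atTop (𝓝 ((φ u).toReal)) := by
    have hdp : Tendsto (fun n => dist (un n) u ^ p) atTop (𝓝 (0:ℝ)) := by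
      have hc : ContinuousAt (fun x : ℝ => x ^ p) 0 :=
        Real.continuousAt_rpow_const 0 p (Or.inr (by linarith))
      have := hc.tendsto.comp hdist
      simpa [Function.comp_def, Real.zero_rpow (by positivity : p ≠ 0)] using this
    have : Tendsto bseq atTop
        (𝓝 ((φ u).toReal + |lam / p| * 0 + C' * 0)) :=
      (tendsto_const_nhds.add (tendsto_const_nhds.mul hdp)).add
        (tendsto_const_nhds.mul hdist)
    simpa using this
  have hlimsup : limsup (fun n => φ (un n)) atTop ≤ φ u := by
    have hco : Tendsto (fun n => ((bseq n : ℝ) : EReal)) atTop (𝓝 (φ u)) := by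
      have := (continuous_coe_real_ereal.tendsto _).comp hbtend
      simpa [Function.comp_def, EReal.coe_toReal hutop (hbot u)] using this
    have hle : ∀ n, φ (un n) ≤ ((bseq n : ℝ) : EReal) := by
      intro n
      rw [← EReal.coe_toReal (huntop n) (hbot (un n))]
      exact_mod_cast hbound n
    calc limsup (fun n => φ (un n)) atTop
        ≤ limsup (fun n => ((bseq n : ℝ) : EReal)) atTop :=
          Filter.limsup_le_limsup (Filter.Eventually.of_forall hle)
            (by isBoundedDefault) (by isBoundedDefault)
      _ = φ u := hco.limsup_eq
  exact tendsto_of_le_liminf_of_limsup_le hliminf hlimsup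


end GradientFlowPaper
end
end

section
/- Let (U,d) be a metric space and φ : U → (−∞,+∞] a proper, d-lower semicontinuous functional which is (λ,p)-geodesically convex for some λ ∈ ℝ and p ∈ (1,∞). Then the local slope admits the representation |∂φ|(u) = sup_{v ≠ u} ( (φ(u) − φ(v))/d(u,v) + (λ/p) d(u,v)^{p−1} )⁺ for all u ∈ D(φ), and |∂φ| is d-lower semicontinuous: if d(u_n,u) → 0 then liminf_n |∂φ|(u_n) ≥ |∂φ|(u). -/
open Filter MeasureTheory Set Topology
open scoped ENNReal NNReal Classical

noncomputable section

namespace GradientFlowPaper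

private lemma slope_ge {U : Type*} [MetricSpace U] (φ : U → EReal) (lam p : ℝ) (hp : 1 < p)
    (hbot : ∀ x : U, φ x ≠ ⊥) (hconv : GeodConvex φ lam p)
    {u v : U} (hu : φ u ≠ ⊤) (hv : φ v ≠ ⊤) (hne : v ≠ u) :
    ENNReal.ofReal ((φ u - φ v).toReal / dist u v + (lam / p) * dist u v ^ (p - 1)) ≤
      localSlope φ u := by
  set d := dist u v with hd_def
  have hd : 0 < d := dist_pos.2 (Ne.symm hne)
  obtain ⟨γ, hγ0, hγ1, hspeed, hcvx⟩ := hconv u v hu hv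
  set a := (φ u).toReal with ha_def
  set b := (φ v).toReal with hb_def
  have hφu : φ u = (a : EReal) := (EReal.coe_toReal hu (hbot u)).symm
  have hφv : φ v = (b : EReal) := (EReal.coe_toReal hv (hbot v)).symm
  have hsub : (φ u - φ v).toReal = a - b := EReal.toReal_sub hu (hbot u) hv (hbot v)
  set l : Filter ℝ := 𝓝[Set.Ioc (0:ℝ) 1] 0 with hl_def
  have hl : l.NeBot := by
    rw [hl_def, ← mem_closure_iff_nhdsWithin_neBot, closure_Ioc (zero_ne_one)]
    exact ⟨le_rfl, zero_le_one⟩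
  have hdist' : ∀ t ∈ Set.Ioc (0:ℝ) 1, dist u (γ t) = t * d := by
    intro t ht
    have := hspeed 0 t le_rfl ht.1.le ht.2
    rw [hγ0, hγ1] at this
    simpa using this
  have hγtend : Tendsto γ l (𝓝[≠] u) := by
    rw [tendsto_nhdsWithin_iff]
    constructor
    · rw [tendsto_iff_dist_tendsto_zero]
      have hev : ∀ᶠ t in l, t * d = dist (γ t) u :=
        eventually_mem_nhdsWithin.mono (fun t ht => by rw [dist_comm]; exact (hdist' t ht).symm)
      refine Tendsto.congr' hev ?_
      have : Tendsto (fun t : ℝ => t * d) (𝓝 0) (𝓝 (0 * d)) :=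
        (continuous_id.mul continuous_const).tendsto 0
      simpa using this.mono_left nhdsWithin_le_nhds
    · refine eventually_mem_nhdsWithin.mono (fun t ht => ?_)
      have h1 := hdist' t ht
      intro hcon
      simp only [Set.mem_singleton_iff] at hcon
      rw [hcon, dist_self] at h1
      have : 0 < t * d := mul_pos ht.1 hd
      linarith
  -- lower bound along the geodesic
  have key : ∀ᶠ t in l,
      ENNReal.ofReal ((a - b)/d + (lam/p)*(1-t)*d^(p-1)) ≤
        (fun w => ENNReal.ofReal ((φ u - φ w).toReal / dist u w)) (γ t) := by
    refine eventually_mem_nhdsWithin.mono (fun t ht => ?_)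
    have hφγ := hcvx t ht.1.le ht.2
    rw [hγ0, hγ1] at hφγ
    have hrhs : ((1 - t:ℝ):EReal) * φ u + ((t:ℝ):EReal) * φ v
        - (((lam/p)*t*(1-t)*d^p :ℝ):EReal)
        = (((1-t)*a + t*b - (lam/p)*t*(1-t)*d^p : ℝ) : EReal) := by
      rw [hφu, hφv]; norm_cast
    rw [hrhs] at hφγ
    have hγtop : φ (γ t) ≠ ⊤ := (hφγ.trans_lt (EReal.coe_lt_top _)).ne
    have htr : (φ (γ t)).toReal ≤ (1-t)*a + t*b - (lam/p)*t*(1-t)*d^p := by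
      have := EReal.toReal_le_toReal hφγ (hbot _) (EReal.coe_ne_top _)
      simpa only [EReal.toReal_coe] using this
    have hnum : (φ u - φ (γ t)).toReal = a - (φ (γ t)).toReal :=
      EReal.toReal_sub hu (hbot u) hγtop (hbot _)
    have hdistt : dist u (γ t) = t * d := hdist' t ht
    simp only
    apply ENNReal.ofReal_le_ofReal
    rw [hnum, hdistt]
    have htd : 0 < t*d := mul_pos ht.1 hd
    have heq : (t*(a-b) + (lam/p)*t*(1-t)*d^p)/(t*d)
        = (a-b)/d + (lam/p)*(1-t)*d^(p-1) := by
      have hdp : d^(p:ℝ) = d^(p-1) * d := by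
        rw [← Real.rpow_add_one hd.ne' (p-1)]
        norm_num
      rw [hdp]
      have ht0 : t ≠ 0 := ht.1.ne'
      field_simp
    calc (a-b)/d + (lam/p)*(1-t)*d^(p-1)
        = (t*(a-b) + (lam/p)*t*(1-t)*d^p)/(t*d) := heq.symm
      _ ≤ (a - (φ (γ t)).toReal)/(t*d) := by
          gcongr
          linarith
  -- take limits
  have lower_tendsto : Tendsto (fun t => ENNReal.ofReal ((a - b)/d + (lam/p)*(1-t)*d^(p-1))) l
      (𝓝 (ENNReal.ofReal ((a-b)/d + (lam/p)*d^(p-1)))) := by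
    apply ENNReal.continuous_ofReal.continuousAt.tendsto.comp
    have hc : Tendsto (fun t:ℝ => (a-b)/d + (lam/p)*(1-t)*d^(p-1)) (𝓝 0)
        (𝓝 ((a-b)/d + (lam/p)*(1-0)*d^(p-1))) := by
      apply Continuous.tendsto
      exact continuous_const.add
        ((continuous_const.mul (continuous_const.sub continuous_id)).mul continuous_const)
    simpa using hc.mono_left nhdsWithin_le_nhds
  rw [hsub, localSlope]
  calc ENNReal.ofReal ((a-b)/d + lam/p * d^(p-1))
      = Filter.liminf (fun t => ENNReal.ofReal ((a - b)/d + (lam/p)*(1-t)*d^(p-1))) l :=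
        lower_tendsto.liminf_eq.symm
    _ ≤ Filter.liminf ((fun w => ENNReal.ofReal ((φ u - φ w).toReal / dist u w)) ∘ γ) l :=
        Filter.liminf_le_liminf key
    _ ≤ Filter.limsup ((fun w => ENNReal.ofReal ((φ u - φ w).toReal / dist u w)) ∘ γ) l :=
        Filter.liminf_le_limsup
    _ = Filter.limsup (fun w => ENNReal.ofReal ((φ u - φ w).toReal / dist u w)) (Filter.map γ l) :=
        Filter.limsup_comp _ _ _
    _ ≤ Filter.limsup (fun w => ENNReal.ofReal ((φ u - φ w).toReal / dist u w)) (𝓝[≠] u) :=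
        Filter.limsup_le_limsup_of_le hγtend

private lemma slope_le {U : Type*} [MetricSpace U] (φ : U → EReal) (lam p : ℝ) (hp : 1 < p)
    (hbot : ∀ x : U, φ x ≠ ⊥)
    {u : U} (hu : φ u ≠ ⊤) :
    localSlope φ u ≤ ⨆ v : {v : U // v ≠ u},
      (if φ v.1 = ⊤ then 0 else
        ENNReal.ofReal ((φ u - φ v.1).toReal / dist u v.1
          + (lam / p) * dist u v.1 ^ (p - 1))) := by
  set S := ⨆ v : {v : U // v ≠ u},
      (if φ v.1 = ⊤ then 0 else
        ENNReal.ofReal ((φ u - φ v.1).toReal / dist u v.1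
          + (lam / p) * dist u v.1 ^ (p - 1))) with hS
  apply ENNReal.le_of_forall_pos_le_add
  intro ε hε _
  have hsmall : ∀ᶠ v in 𝓝[≠] u, |lam/p| * dist u v ^ (p-1) ≤ (ε:ℝ) := by
    have htend : Tendsto (fun v : U => |lam/p| * dist u v ^ (p-1)) (𝓝 u) (𝓝 0) := by
      have h1 : Tendsto (fun v : U => dist u v) (𝓝 u) (𝓝 0) := by
        have := (continuous_const.dist continuous_id : Continuous fun v : U => dist u v).tendsto u
        simpa using this
      have h2 : Tendsto (fun x : ℝ => x ^ (p-1)) (𝓝 0) (𝓝 0) := by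
        have := (Real.continuousAt_rpow_const 0 (p-1) (Or.inr (by linarith))).tendsto
        simpa [Real.zero_rpow (by linarith : p - 1 ≠ 0)] using this
      have := (h2.comp h1).const_mul (|lam/p|)
      simpa using this
    exact ((htend.mono_left nhdsWithin_le_nhds).eventually
      (eventually_lt_nhds (by exact_mod_cast hε))).mono (fun v hv => hv.le)
  have hbound : ∀ᶠ v in 𝓝[≠] u,
      ENNReal.ofReal ((φ u - φ v).toReal / dist u v) ≤ S + (ε : ℝ≥0∞) := by
    filter_upwards [hsmall, eventually_mem_nhdsWithin] with v hsm hvne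
    have hvne' : v ≠ u := hvne
    by_cases hvt : φ v = ⊤
    · simp [hvt, EReal.sub_top]
    · set x := (φ u - φ v).toReal / dist u v with hx
      set c := (lam/p) * dist u v ^ (p-1) with hc
      have h1 : ENNReal.ofReal x ≤ ENNReal.ofReal (x + c) + ENNReal.ofReal |c| := by
        calc ENNReal.ofReal x ≤ ENNReal.ofReal ((x + c) + |c|) :=
              ENNReal.ofReal_le_ofReal (by linarith [neg_abs_le c])
          _ ≤ _ := ENNReal.ofReal_add_le
      have h2 : ENNReal.ofReal (x + c) ≤ S :=
        le_iSup_of_le (⟨v, hvne'⟩ : {v : U // v ≠ u}) (by rw [if_neg hvt])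
      have h3 : ENNReal.ofReal |c| ≤ (ε : ℝ≥0∞) := by
        have habs : |c| = |lam/p| * dist u v ^ (p-1) := by
          rw [hc, abs_mul, abs_of_nonneg (Real.rpow_nonneg dist_nonneg _)]
        calc ENNReal.ofReal |c| ≤ ENNReal.ofReal (ε:ℝ) :=
              ENNReal.ofReal_le_ofReal (habs ▸ hsm)
          _ = (ε : ℝ≥0∞) := ENNReal.ofReal_coe_nnreal
      exact h1.trans (add_le_add h2 h3)
  exact Filter.limsup_le_of_le (h := hbound)

/-- **Proposition (Representation and lower semicontinuity of the local slope).**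
If `φ` is proper, `d`-lower semicontinuous and `(λ,p)`-geodesically convex, then
`|∂φ|(u) = sup_{v ≠ u} ((φ(u)-φ(v))/d(u,v) + (λ/p) d(u,v)^{p-1})⁺` on `D(φ)`,
and the local slope is `d`-lower semicontinuous. -/
theorem local_slope_representation_and_lsc
    {U : Type*} [MetricSpace U] (φ : U → EReal) (lam p : ℝ) (hp : 1 < p)
    (hproper : (∃ u : U, φ u ≠ ⊤) ∧ ∀ u : U, φ u ≠ ⊥)
    (hlsc : LowerSemicontinuous φ)
    (hconv : GeodConvex φ lam p) :
    (∀ u : U, φ u ≠ ⊤ →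
      localSlope φ u = ⨆ v : {v : U // v ≠ u},
        (if φ v.1 = ⊤ then 0 else
          ENNReal.ofReal ((φ u - φ v.1).toReal / dist u v.1
            + (lam / p) * dist u v.1 ^ (p - 1)))) ∧
    (∀ (un : ℕ → U) (u : U), φ u ≠ ⊤ → (∀ n, φ (un n) ≠ ⊤) →
      Filter.Tendsto (fun n => dist (un n) u) Filter.atTop (nhds (0:ℝ)) →
      localSlope φ u ≤ Filter.liminf (fun n => localSlope φ (un n)) Filter.atTop) := by
  have hbot := hproper.2
  have parta : ∀ u : U, φ u ≠ ⊤ →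
      localSlope φ u = ⨆ v : {v : U // v ≠ u},
        (if φ v.1 = ⊤ then 0 else
          ENNReal.ofReal ((φ u - φ v.1).toReal / dist u v.1
            + (lam / p) * dist u v.1 ^ (p - 1))) := by
    intro u hu
    apply le_antisymm (slope_le φ lam p hp hbot hu)
    apply iSup_le
    rintro ⟨v, hvne⟩
    by_cases hvt : φ v = ⊤
    · simp [hvt]
    · rw [if_neg hvt]
      exact slope_ge φ lam p hp hbot hconv hu hvt hvne
  refine ⟨parta, ?_⟩
  intro un u hu hun hdist
  rw [parta u hu]
  apply iSup_le
  rintro ⟨v, hvne⟩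
  by_cases hvt : φ v = ⊤
  · simp [hvt]
  rw [if_neg hvt]
  set d := dist u v with hd_def
  have hd : 0 < d := dist_pos.2 (Ne.symm hvne)
  set a := (φ u).toReal with ha_def
  set b := (φ v).toReal with hb_def
  have hsub : (φ u - φ v).toReal = a - b := EReal.toReal_sub hu (hbot u) hvt (hbot v)
  rw [hsub]
  set t0 := (a - b)/d + (lam/p)*d^(p-1) with ht0

  rw [Filter.le_liminf_iff]
  intro y hy
  have hytop : y ≠ ⊤ := ne_top_of_lt hy
  have hyt : y.toReal < t0 := (ENNReal.lt_ofReal_iff_toReal_lt hytop).1 hy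
  set δ := (t0 - y.toReal) * d / 2 with hδ
  have hδpos : 0 < δ := by
    have h1 : 0 < t0 - y.toReal := by linarith
    positivity
  have hun_tendsto : Tendsto un atTop (𝓝 u) := tendsto_iff_dist_tendsto_zero.2 hdist
  have hdn : Tendsto (fun n => dist (un n) v) atTop (𝓝 d) := by
    have hc : Continuous fun w : U => dist w v := continuous_id.dist continuous_const
    exact (hc.tendsto u).comp hun_tendsto
  have hh : Tendsto (fun n => (a - δ - b)/(dist (un n) v)
      + (lam/p)*(dist (un n) v)^(p-1)) atTop (𝓝 ((a - δ - b)/d + (lam/p)*d^(p-1))) := by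
    apply Tendsto.add
    · exact tendsto_const_nhds.div hdn hd.ne'
    · exact (Tendsto.comp (Real.continuousAt_rpow_const d (p-1)
        (Or.inl hd.ne')).tendsto hdn).const_mul _
  have hlim_gt : y.toReal < (a - δ - b)/d + (lam/p)*d^(p-1) := by
    have h1 : (a - δ - b)/d = (a-b)/d - δ/d := by ring
    have hδd : δ/d = (t0 - y.toReal)/2 := by
      rw [hδ]; field_simp
    rw [h1, hδd, ht0]
    rw [ht0] at hyt
    linarith
  have hev1 : ∀ᶠ n in atTop, y.toReal <
      (a - δ - b)/(dist (un n) v) + (lam/p)*(dist (un n) v)^(p-1) :=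
    hh.eventually (eventually_gt_nhds hlim_gt)
  have hev2 : ∀ᶠ n in atTop, ((a - δ : ℝ) : EReal) < φ (un n) := by
    have hlt : ((a - δ : ℝ) : EReal) < φ u := by
      rw [show φ u = (a : EReal) from (EReal.coe_toReal hu (hbot u)).symm]
      exact_mod_cast sub_lt_self a hδpos
    exact hun_tendsto.eventually (hlsc u _ hlt)
  have hev3 : ∀ᶠ n in atTop, 0 < dist (un n) v := hdn.eventually (eventually_gt_nhds hd)
  filter_upwards [hev1, hev2, hev3] with n h1 h2 h3
  have hne_n : v ≠ un n := by
    intro h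
    rw [h, dist_self] at h3
    exact lt_irrefl 0 h3
  have hslope := slope_ge φ lam p hp hbot hconv (hun n) hvt hne_n
  have hsubn : (φ (un n) - φ v).toReal = (φ (un n)).toReal - b :=
    EReal.toReal_sub (hun n) (hbot _) hvt (hbot v)
  have h2' : a - δ < (φ (un n)).toReal := by
    rw [← EReal.coe_lt_coe_iff, EReal.coe_toReal (hun n) (hbot _)]
    exact h2
  have hkey : y.toReal < (φ (un n) - φ v).toReal / dist (un n) v
      + (lam/p)*(dist (un n) v)^(p-1) := by
    rw [hsubn]
    refine h1.trans_le ?_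
    gcongr
  exact lt_of_lt_of_le ((ENNReal.lt_ofReal_iff_toReal_lt hytop).2 hkey) hslope

end GradientFlowPaper
end
end
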